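/- arXiv:1709.05506 — 5 statements merged into one kernel-verified Lean document; each statement's English description precedes it below -/
import Mathlib

section
/- Let l be a positive integer and let 𝒳 be a convex subset of ℝ^l that is the convex hull of a subset S ⊆ 𝒳. Let f : 𝒳 × 𝒳 → [0,1] be a symmetric function. Then f reproduces mixtures of connectivity behaviours from S if and only if there exist integers p ≥ 1 and q ≥ 0 with d = p + q ≤ l + 1, a matrix T ∈ ℝ^{d×l}, and a vector ν ∈ ℝ^d such that f(x,y) = (Tx + ν)ᵀ I_{p,q} (Ty + ν) for all x, y ∈ 𝒳. -/
open scoped BigOperators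
open Matrix

/-- `I_{p,q}`: the `d × d` diagonal matrix (`d = p + q`) with `p` ones followed by
`q` minus ones on its diagonal. -/
noncomputable def Ipq (p q : ℕ) : Matrix (Fin (p + q)) (Fin (p + q)) ℝ :=
  Matrix.diagonal fun i => if (i : ℕ) < p then (1 : ℝ) else -1

/-- `f` reproduces mixtures of connectivity behaviours from `S`: whenever
`x = ∑ α_r • u_r` with `u_r ∈ S`, `0 ≤ α_r ≤ 1`, `∑ α_r = 1`, one has
`f x y = ∑ α_r * f (u_r) y` for all `y ∈ X`. -/
def ReproducesMixtures {l : ℕ} (X S : Set (Fin l → ℝ))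
    (f : (Fin l → ℝ) → (Fin l → ℝ) → ℝ) : Prop :=
  ∀ (m : ℕ) (u : Fin m → (Fin l → ℝ)) (α : Fin m → ℝ),
    (∀ r, u r ∈ S) → (∀ r, 0 ≤ α r ∧ α r ≤ 1) → (∑ r, α r) = 1 →
    ∀ y ∈ X, f (∑ r, α r • u r) y = ∑ r, α r * f (u r) y

private lemma ipq_dot (p q : ℕ) (v w : Fin (p+q) → ℝ) :
    v ⬝ᵥ (Ipq p q).mulVec w = ∑ i : Fin (p+q), (if (i:ℕ) < p then (1:ℝ) else -1) * (v i * w i) := by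
  simp only [Ipq, dotProduct, Matrix.mulVec_diagonal]
  exact Finset.sum_congr rfl fun i _ => by ring

private lemma sum_dot {ι n : Type*} [Fintype ι] [Fintype n] (v : ι → n → ℝ) (w : n → ℝ) :
    (∑ r, v r) ⬝ᵥ w = ∑ r, v r ⬝ᵥ w := by
  simp only [dotProduct, Finset.sum_apply, Finset.sum_mul]
  exact Finset.sum_comm

private lemma rev_dir {l p q : ℕ} (X S : Set (Fin l → ℝ)) (hSX : S ⊆ X) (hXconv : Convex ℝ X)
    (f : (Fin l → ℝ) → (Fin l → ℝ) → ℝ)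
    (T : Matrix (Fin (p + q)) (Fin l) ℝ) (ν : Fin (p + q) → ℝ)
    (hrep : ∀ x ∈ X, ∀ y ∈ X,
      f x y = (T.mulVec x + ν) ⬝ᵥ (Ipq p q).mulVec (T.mulVec y + ν)) :
    ReproducesMixtures X S f := by
  intro m u α hu hα hsum y hy
  have hx : (∑ r, α r • u r) ∈ X :=
    hXconv.sum_mem (fun i _ => (hα i).1) hsum (fun i _ => hSX (hu i))
  rw [hrep _ hx y hy]
  have hkey : T.mulVec (∑ r, α r • u r) + ν = ∑ r, α r • (T.mulVec (u r) + ν) := by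
    have h1 : T.mulVec (∑ r, α r • u r) = ∑ r, α r • T.mulVec (u r) := by
      rw [show T.mulVec (∑ r, α r • u r) = T.mulVecLin (∑ r, α r • u r) from rfl, map_sum]
      simp [Matrix.mulVecLin_apply, Matrix.mulVec_smul]
    have h2 : (ν : Fin (p+q) → ℝ) = ∑ r, α r • ν := by
      rw [← Finset.sum_smul, hsum, one_smul]
    rw [h1]
    conv_lhs => rw [h2]
    rw [← Finset.sum_add_distrib]
    exact Finset.sum_congr rfl fun r _ => (smul_add _ _ _).symm
  rw [hkey, sum_dot]
  exact Finset.sum_congr rfl fun r _ => by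
    rw [smul_dotProduct, hrep _ (hSX (hu r)) y hy, smul_eq_mul]
private lemma rmFT {l : ℕ} {X S : Set (Fin l → ℝ)} {f : (Fin l → ℝ) → (Fin l → ℝ) → ℝ}
    (hRM : ReproducesMixtures X S f)
    {ι : Type} [Fintype ι] (u : ι → (Fin l → ℝ)) (α : ι → ℝ)
    (hu : ∀ r, u r ∈ S) (h0 : ∀ r, 0 ≤ α r) (h1 : ∑ r, α r = 1) :
    ∀ y ∈ X, f (∑ r, α r • u r) y = ∑ r, α r * f (u r) y := by
  intro y hy
  have hle : ∀ r, α r ≤ 1 := fun r => by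
    rw [← h1]; exact Finset.single_le_sum (fun i _ => h0 i) (Finset.mem_univ r)
  let e := (Fintype.equivFin ι).symm
  have h1' : ∑ i, α (e i) = 1 := by rw [Equiv.sum_comp e]; exact h1
  have := hRM _ (u ∘ e) (α ∘ e) (fun r => hu _) (fun r => ⟨h0 _, hle _⟩) h1' y hy
  simpa only [Function.comp, Equiv.sum_comp e (fun r => α r • u r),
    Equiv.sum_comp e (fun r => α r * f (u r) y)] using this

private lemma mixX {l : ℕ} {X S : Set (Fin l → ℝ)} {f : (Fin l → ℝ) → (Fin l → ℝ) → ℝ}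
    (hX : X = convexHull ℝ S) (hRM : ReproducesMixtures X S f)
    {ι : Type} [Fintype ι] (x : ι → (Fin l → ℝ)) (α : ι → ℝ)
    (hx : ∀ r, x r ∈ X) (h0 : ∀ r, 0 ≤ α r) (h1 : ∑ r, α r = 1) :
    ∀ y ∈ X, f (∑ r, α r • x r) y = ∑ r, α r * f (x r) y := by
  intro y hy
  have hdec : ∀ r, ∃ (κ : Type) (_ : Fintype κ) (w : κ → ℝ) (z : κ → (Fin l → ℝ)),
      (∀ i, 0 ≤ w i) ∧ ∑ i, w i = 1 ∧ (∀ i, z i ∈ S) ∧ ∑ i, w i • z i = x r := by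
    intro r
    have := hx r
    rw [hX] at this
    exact mem_convexHull_iff_exists_fintype.mp this
  choose κ inst w z hw0 hw1 hzS hzx using hdec
  letI : ∀ r, Fintype (κ r) := inst
  have hWsum : ∑ s : Σ r : ι, κ r, α s.1 * w s.1 s.2 = 1 := by
    rw [← Finset.univ_sigma_univ, Finset.sum_sigma]
    simp only [← Finset.mul_sum, hw1, mul_one, h1]
  have hvec : ∑ s : Σ r : ι, κ r, (α s.1 * w s.1 s.2) • z s.1 s.2 = ∑ r, α r • x r := by
    rw [← Finset.univ_sigma_univ, Finset.sum_sigma]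
    refine Finset.sum_congr rfl fun r _ => ?_
    rw [← hzx r, Finset.smul_sum]
    exact Finset.sum_congr rfl fun i _ => by rw [smul_smul]
  have hmain := rmFT hRM (fun s : Σ r : ι, κ r => z s.1 s.2) (fun s => α s.1 * w s.1 s.2)
    (fun s => hzS s.1 s.2) (fun s => mul_nonneg (h0 s.1) (hw0 s.1 s.2)) hWsum y hy
  rw [hvec] at hmain
  rw [hmain, ← Finset.univ_sigma_univ, Finset.sum_sigma]
  refine Finset.sum_congr rfl fun r _ => ?_
  have hxr : f (x r) y = ∑ i, w r i * f (z r i) y := by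
    rw [← hzx r]
    exact rmFT hRM (z r) (w r) (hzS r) (hw0 r) (hw1 r) y hy
  rw [hxr, Finset.mul_sum]
  exact Finset.sum_congr rfl fun i _ => by ring

private lemma nullX {l : ℕ} {X S : Set (Fin l → ℝ)} {f : (Fin l → ℝ) → (Fin l → ℝ) → ℝ}
    (hX : X = convexHull ℝ S) (hRM : ReproducesMixtures X S f)
    {ι : Type} [Fintype ι] (x : ι → (Fin l → ℝ)) (c : ι → ℝ)
    (hx : ∀ r, x r ∈ X) (hc0 : ∑ r, c r = 0) (hcv : ∑ r, c r • x r = 0) :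
    ∀ y ∈ X, ∑ r, c r * f (x r) y = 0 := by
  intro y hy
  set P : ι → ℝ := fun r => max (c r) 0 with hP
  set N : ι → ℝ := fun r => max (-c r) 0 with hN
  have hPN : ∀ r, c r = P r - N r := by
    intro r
    rcases le_total 0 (c r) with h | h
    · simp [hP, hN, max_eq_left h, max_eq_right (neg_nonpos.mpr h)]
    · simp [hP, hN, max_eq_right h, max_eq_left (neg_nonneg.mpr h)]
  have hP0 : ∀ r, 0 ≤ P r := fun r => le_max_right _ _
  have hN0 : ∀ r, 0 ≤ N r := fun r => le_max_right _ _
  set s := ∑ r, P r with hs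
  have hsN : ∑ r, N r = s := by
    have : ∑ r, (P r - N r) = 0 := by
      rw [← hc0]; exact Finset.sum_congr rfl fun r _ => (hPN r).symm
    rw [Finset.sum_sub_distrib] at this
    linarith
  rcases eq_or_lt_of_le (Finset.sum_nonneg (fun r _ => hP0 r) : (0:ℝ) ≤ s) with hs0 | hspos
  · -- all coefficients vanish
    have hPz : ∀ r ∈ Finset.univ, P r = 0 :=
      fun r hr => (Finset.sum_eq_zero_iff_of_nonneg (fun i _ => hP0 i)).mp hs0.symm r hr
    have hNz : ∀ r ∈ Finset.univ, N r = 0 :=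
      fun r hr => (Finset.sum_eq_zero_iff_of_nonneg (fun i _ => hN0 i)).mp (hsN.trans hs0.symm) r hr
    refine Finset.sum_eq_zero fun r hr => ?_
    rw [hPN r, hPz r hr, hNz r hr]; ring
  · have hsne : s ≠ 0 := ne_of_gt hspos
    have hPsum : ∑ r, P r / s = 1 := by
      rw [← Finset.sum_div, ← hs, div_self hsne]
    have hNsum : ∑ r, N r / s = 1 := by
      rw [← Finset.sum_div, hsN, div_self hsne]
    have hveq : ∑ r, (P r / s) • x r = ∑ r, (N r / s) • x r := by
      have : ∑ r, (P r / s) • x r - ∑ r, (N r / s) • x r = 0 := by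
        rw [← Finset.sum_sub_distrib]
        have : ∀ r, (P r / s) • x r - (N r / s) • x r = (s⁻¹ * c r) • x r := by
          intro r
          rw [← sub_smul]
          congr 1
          rw [hPN r]; field_simp
        rw [Finset.sum_congr rfl fun r _ => this r]
        simp only [← smul_smul, ← Finset.smul_sum, hcv, smul_zero]
      exact sub_eq_zero.mp this
    have hPf := mixX hX hRM x (fun r => P r / s) hx
      (fun r => div_nonneg (hP0 r) hspos.le) hPsum y hy
    have hNf := mixX hX hRM x (fun r => N r / s) hx
      (fun r => div_nonneg (hN0 r) hspos.le) hNsum y hy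
    rw [hveq] at hPf
    have heq : ∑ r, (P r / s) * f (x r) y = ∑ r, (N r / s) * f (x r) y := by
      rw [← hPf, ← hNf]
    have : ∑ r, c r * f (x r) y
        = s * (∑ r, (P r / s) * f (x r) y - ∑ r, (N r / s) * f (x r) y) := by
      rw [← Finset.sum_sub_distrib, Finset.mul_sum]
      refine Finset.sum_congr rfl fun r _ => ?_
      rw [hPN r]; field_simp
    rw [this, heq, sub_self, mul_zero]

private lemma affX {l : ℕ} {X S : Set (Fin l → ℝ)} {f : (Fin l → ℝ) → (Fin l → ℝ) → ℝ}
    (hX : X = convexHull ℝ S) (hRM : ReproducesMixtures X S f)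
    {ι : Type} [Fintype ι] (x0 : Fin l → ℝ) (hx0 : x0 ∈ X)
    (x : ι → (Fin l → ℝ)) (c : ι → ℝ) (hx : ∀ r, x r ∈ X)
    (hc1 : ∑ r, c r = 1) (hcv : ∑ r, c r • x r = x0) :
    ∀ y ∈ X, f x0 y = ∑ r, c r * f (x r) y := by
  intro y hy
  have key := nullX hX hRM (Option.elim · x0 x) (Option.elim · (-1) c)
    (fun r => by cases r <;> simp [hx0, hx]) ?_ ?_ y hy
  · simp only [Fintype.sum_option, Option.elim] at key
    linarith [key]
  · simp [Fintype.sum_option, hc1]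
  · simp only [Fintype.sum_option, Option.elim, hcv]
    simp
private lemma fwd_dir {l : ℕ} (X S : Set (Fin l → ℝ)) (hSX : S ⊆ X) (hX : X = convexHull ℝ S)
    (f : (Fin l → ℝ) → (Fin l → ℝ) → ℝ)
    (hrange : ∀ x ∈ X, ∀ y ∈ X, f x y ∈ Set.Icc (0 : ℝ) 1)
    (hsym : ∀ x ∈ X, ∀ y ∈ X, f x y = f y x)
    (hRM : ReproducesMixtures X S f) :
    ∃ (p q : ℕ), 1 ≤ p ∧ p + q ≤ l + 1 ∧
      ∃ (T : Matrix (Fin (p + q)) (Fin l) ℝ) (ν : Fin (p + q) → ℝ),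
        ∀ x ∈ X, ∀ y ∈ X,
          f x y = (T.mulVec x + ν) ⬝ᵥ (Ipq p q).mulVec (T.mulVec y + ν) := by
  classical
  rcases Set.eq_empty_or_nonempty X with hXe | ⟨x0, hx0⟩
  · refine ⟨1, 0, le_refl 1, by omega, 0, 0, fun x hx => ?_⟩
    rw [hXe] at hx; exact absurd hx (Set.notMem_empty x)
  -- embed into ℝ^{l+1}
  set φ : (Fin l → ℝ) → (Fin (l+1) → ℝ) := fun x => Fin.snoc x 1 with hφ
  obtain ⟨b, hbsub, hspan, hli⟩ := exists_linearIndependent ℝ (φ '' X)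
  haveI : Fintype b := hli.setFinite.fintype
  have hρ : ∀ v : b, ∃ x, x ∈ X ∧ φ x = (v : Fin (l+1) → ℝ) := fun v => by
    obtain ⟨x, hx, hfx⟩ := hbsub v.2
    exact ⟨x, hx, hfx⟩
  choose ρ hρX hρφ using hρ
  have hmem : ∀ x ∈ X, φ x ∈ Submodule.span ℝ (Set.range ((↑) : b → (Fin (l+1) → ℝ))) := by
    intro x hx
    rw [Subtype.range_coe, hspan]
    exact Submodule.subset_span ⟨x, hx, rfl⟩
  obtain ⟨K, hK⟩ := LinearMap.exists_extend hli.repr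
  have hKrepr : ∀ (x : Fin (l+1) → ℝ) (h : x ∈ Submodule.span ℝ
      (Set.range ((↑) : b → (Fin (l+1) → ℝ)))), K x = hli.repr ⟨x, h⟩ := by
    intro x h
    have := LinearMap.congr_fun hK ⟨x, h⟩
    simpa using this
  have hkey : ∀ x ∈ X, ∑ v : b, K (φ x) v • (v : Fin (l+1) → ℝ) = φ x := by
    intro x hx
    rw [hKrepr (φ x) (hmem x hx)]
    have h2 := hli.linearCombination_repr ⟨φ x, hmem x hx⟩
    rw [Finsupp.linearCombination_apply, Finsupp.sum_fintype _ _ (by simp)] at h2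
    simpa using h2
  -- coordinate identities
  have hκ1 : ∀ x ∈ X, ∑ v : b, K (φ x) v = 1 := by
    intro x hx
    have := congrFun (hkey x hx) (Fin.last l)
    rw [Finset.sum_apply] at this
    simp only [Pi.smul_apply, smul_eq_mul] at this
    have hlast : ∀ v : b, (v : Fin (l+1) → ℝ) (Fin.last l) = 1 := by
      intro v
      rw [← hρφ v, hφ]
      simp [Fin.snoc_last]
    simp only [hlast, mul_one] at this
    rw [this, hφ]
    simp [Fin.snoc_last]
  have hκx : ∀ x ∈ X, ∑ v : b, K (φ x) v • ρ v = x := by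
    intro x hx
    funext j
    have := congrFun (hkey x hx) (Fin.castSucc j)
    rw [Finset.sum_apply] at this
    simp only [Pi.smul_apply, smul_eq_mul] at this
    have hcs : ∀ v : b, (v : Fin (l+1) → ℝ) (Fin.castSucc j) = ρ v j := by
      intro v
      rw [← hρφ v, hφ]
      simp [Fin.snoc_castSucc]
    simp only [hcs] at this
    rw [Finset.sum_apply]
    simp only [Pi.smul_apply, smul_eq_mul]
    rw [this, hφ]
    simp [Fin.snoc_castSucc]
  -- f as a small quadratic form in the coordinates
  have haff : ∀ x ∈ X, ∀ y ∈ X, f x y = ∑ v : b, K (φ x) v * f (ρ v) y := by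
    intro x hx y hy
    exact affX hX hRM x hx ρ (fun v => K (φ x) v) hρX (hκ1 x hx) (hκx x hx) y hy
  have hboth : ∀ x ∈ X, ∀ y ∈ X,
      f x y = ∑ v : b, ∑ w : b, K (φ x) v * K (φ y) w * f (ρ v) (ρ w) := by
    intro x hx y hy
    rw [haff x hx y hy]
    refine Finset.sum_congr rfl fun v _ => ?_
    rw [hsym (ρ v) (hρX v) y hy, haff y hy (ρ v) (hρX v), Finset.mul_sum]
    refine Finset.sum_congr rfl fun w _ => ?_
    rw [hsym (ρ w) (hρX w) (ρ v) (hρX v)]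
    ring
  -- spectral decomposition of the small matrix
  set d₀ := Fintype.card ↑b with hd₀
  have hd₀le : d₀ ≤ l + 1 := by
    have := hli.fintype_card_le_finrank
    rwa [Module.finrank_fin_fun] at this
  set e : Fin d₀ ≃ ↑b := (Fintype.equivFin ↑b).symm with he
  set A : Matrix (Fin d₀) (Fin d₀) ℝ := Matrix.of fun j k => f (ρ (e j)) (ρ (e k)) with hA
  have hAH : A.IsHermitian := by
    rw [Matrix.IsHermitian]
    ext j k
    simp only [Matrix.conjTranspose_apply, hA, Matrix.of_apply, star_trivial]
    exact hsym _ (hρX _) _ (hρX _)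
  set U : Matrix (Fin d₀) (Fin d₀) ℝ := (hAH.eigenvectorUnitary : Matrix (Fin d₀) (Fin d₀) ℝ)
    with hU
  set lam : Fin d₀ → ℝ := hAH.eigenvalues with hlam
  have hUU : U * star U = 1 := (Matrix.mem_unitaryGroup_iff).mp hAH.eigenvectorUnitary.2
  have hspec : ∀ j k, A j k = ∑ m, U j m * lam m * U k m := by
    intro j k
    conv_lhs => rw [hAH.spectral_theorem, Unitary.conjStarAlgAut_apply]
    rw [Matrix.mul_apply]
    refine Finset.sum_congr rfl fun m _ => ?_
    rw [Matrix.mul_diagonal]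
    simp only [hU, hlam, Matrix.conjTranspose_apply, Matrix.star_apply, star_trivial,
      Function.comp_apply, Matrix.IsHermitian.eigenvectorUnitary_apply, RCLike.ofReal_real_eq_id, id_eq]
  have hquad : ∀ x ∈ X, ∀ y ∈ X, f x y =
      ∑ m, lam m * ((∑ j, U j m * K (φ x) (e j)) * (∑ k, U k m * K (φ y) (e k))) := by
    intro x hx y hy
    have h1 : f x y = ∑ j, ∑ k, K (φ x) (e j) * K (φ y) (e k) * A j k := by
      rw [hboth x hx y hy,
        ← Equiv.sum_comp e (fun v => ∑ w : ↑b, K (φ x) v * K (φ y) w * f (ρ v) (ρ w))]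
      exact Finset.sum_congr rfl fun j _ =>
        (Equiv.sum_comp e (fun w => K (φ x) (e j) * K (φ y) w * f (ρ (e j)) (ρ w))).symm
    have h2 : ∀ j k, K (φ x) (e j) * K (φ y) (e k) * A j k
        = ∑ m, lam m * (U j m * K (φ x) (e j)) * (U k m * K (φ y) (e k)) := by
      intro j k
      rw [hspec j k, Finset.mul_sum]
      exact Finset.sum_congr rfl fun m _ => by ring
    rw [h1]
    have h3 : ∀ j : Fin d₀, (∑ k, ∑ m, lam m * (U j m * K (φ x) (e j)) * (U k m * K (φ y) (e k)))
        = ∑ m, ∑ k, lam m * (U j m * K (φ x) (e j)) * (U k m * K (φ y) (e k)) :=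
      fun j => Finset.sum_comm
    rw [Finset.sum_congr rfl fun j _ =>
      (Finset.sum_congr rfl fun k _ => h2 j k).trans (h3 j), Finset.sum_comm]
    refine Finset.sum_congr rfl fun m _ => ?_
    rw [Finset.sum_mul_sum, Finset.mul_sum]
    refine Finset.sum_congr rfl fun j _ => ?_
    rw [Finset.mul_sum]
    exact Finset.sum_congr rfl fun k _ => by ring
  -- sign decomposition
  set g : (Fin l → ℝ) → Fin d₀ → ℝ :=
    fun x m => Real.sqrt |lam m| * (∑ j, U j m * K (φ x) (e j)) with hg
  have hsq : ∀ m, lam m = (if 0 ≤ lam m then (1:ℝ) else -1) * (Real.sqrt |lam m|)^2 := by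
    intro m
    rcases le_or_gt 0 (lam m) with h | h
    · rw [if_pos h, Real.sq_sqrt (abs_nonneg _), abs_of_nonneg h, one_mul]
    · rw [if_neg (not_le.mpr h), Real.sq_sqrt (abs_nonneg _), abs_of_neg h]; ring
  have hform : ∀ x ∈ X, ∀ y ∈ X,
      f x y = ∑ m, (if 0 ≤ lam m then (1:ℝ) else -1) * (g x m * g y m) := by
    intro x hx y hy
    rw [hquad x hx y hy]
    refine Finset.sum_congr rfl fun m _ => ?_
    rw [hg]
    conv_lhs => rw [hsq m]
    ring
  -- counting positive/negative eigenvalues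
  set p := Fintype.card {m : Fin d₀ // 0 ≤ lam m} with hp
  set q := Fintype.card {m : Fin d₀ // ¬ 0 ≤ lam m} with hq
  have hpq : p + q = d₀ := by
    have := Fintype.card_congr (Equiv.sumCompl (fun m : Fin d₀ => 0 ≤ lam m))
    rwa [Fintype.card_sum, Fintype.card_fin] at this
  -- the sorting equivalence
  set σ : Fin (p + q) ≃ Fin d₀ :=
    finSumFinEquiv.symm.trans ((Equiv.sumCongr (Fintype.equivFin {m : Fin d₀ // 0 ≤ lam m}).symm
      (Fintype.equivFin {m : Fin d₀ // ¬ 0 ≤ lam m}).symm).trans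
      (Equiv.sumCompl (fun m : Fin d₀ => 0 ≤ lam m))) with hσdef
  have hσ : ∀ i : Fin (p + q), ((i : ℕ) < p ↔ 0 ≤ lam (σ i)) := by
    intro i
    rcases h : finSumFinEquiv.symm i with a | a
    · have hi : i = Fin.castAdd q a := by
        have := congrArg finSumFinEquiv h
        rwa [Equiv.apply_symm_apply] at this
      have hσi : σ i = ((Fintype.equivFin {m : Fin d₀ // 0 ≤ lam m}).symm a : Fin d₀) := by
        rw [hσdef]
        simp [h]
      constructor
      · intro _; rw [hσi]; exact ((Fintype.equivFin {m : Fin d₀ // 0 ≤ lam m}).symm a).2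
      · intro _; rw [hi]; simpa using a.2
    · have hi : i = Fin.natAdd p a := by
        have := congrArg finSumFinEquiv h
        rwa [Equiv.apply_symm_apply] at this
      have hσi : σ i = ((Fintype.equivFin {m : Fin d₀ // ¬ 0 ≤ lam m}).symm a : Fin d₀) := by
        rw [hσdef]
        simp [h]
      constructor
      · intro hlt
        exfalso
        rw [hi] at hlt
        simp only [Fin.coe_natAdd] at hlt
        omega
      · intro hge
        exfalso
        rw [hσi] at hge
        exact ((Fintype.equivFin {m : Fin d₀ // ¬ 0 ≤ lam m}).symm a).2 hge
  -- p ≥ 1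
  have hp1 : 1 ≤ p := by
    by_contra hcon
    have hp0 : p = 0 := by omega
    haveI : IsEmpty {m : Fin d₀ // 0 ≤ lam m} := Fintype.card_eq_zero_iff.mp hp0
    have hneg : ∀ m : Fin d₀, lam m < 0 := fun m => by
      by_contra hm
      exact IsEmpty.false (⟨m, not_lt.mp hm⟩ : {m : Fin d₀ // 0 ≤ lam m})
    have hfx0 : 0 ≤ f x0 x0 := (hrange x0 hx0 x0 hx0).1
    have hsum : f x0 x0 = ∑ m, lam m * ((∑ j, U j m * K (φ x0) (e j)) *
        (∑ k, U k m * K (φ x0) (e k))) := hquad x0 hx0 x0 hx0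
    have hterm : ∀ m : Fin d₀, lam m * ((∑ j, U j m * K (φ x0) (e j)) *
        (∑ k, U k m * K (φ x0) (e k))) ≤ 0 := by
      intro m
      have : (0:ℝ) ≤ (∑ j, U j m * K (φ x0) (e j)) * (∑ k, U k m * K (φ x0) (e k)) := by
        have : (∑ j, U j m * K (φ x0) (e j)) = (∑ k, U k m * K (φ x0) (e k)) := rfl
        rw [← this]
        exact mul_self_nonneg _
      exact mul_nonpos_of_nonpos_of_nonneg (le_of_lt (hneg m)) this
    have hallzero : ∀ m : Fin d₀, lam m * ((∑ j, U j m * K (φ x0) (e j)) *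
        (∑ k, U k m * K (φ x0) (e k))) = 0 := by
      have h0 : f x0 x0 = 0 := le_antisymm (hsum ▸ Finset.sum_nonpos fun m _ => hterm m) hfx0
      intro m
      have := Finset.sum_eq_zero_iff_of_nonneg
        (fun m (_ : m ∈ Finset.univ) => neg_nonneg.mpr (hterm m))
      have hz : ∑ m : Fin d₀, -(lam m * ((∑ j, U j m * K (φ x0) (e j)) *
          (∑ k, U k m * K (φ x0) (e k)))) = 0 := by
        rw [Finset.sum_neg_distrib, ← hsum, h0, neg_zero]
      have := (this.mp hz) m (Finset.mem_univ m)
      linarith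
    have hcoord : ∀ m : Fin d₀, (∑ j, U j m * K (φ x0) (e j)) = 0 := by
      intro m
      have := hallzero m
      rcases mul_eq_zero.mp this with h | h
      · exact absurd h (ne_of_lt (hneg m))
      · rcases mul_eq_zero.mp h with h' | h' <;> exact h'
    -- contradiction with ∑ coords = 1
    set w : Fin d₀ → ℝ := fun j => K (φ x0) (e j) with hw
    have hvm : Matrix.vecMul w U = 0 := by
      funext m
      rw [Matrix.vecMul, Pi.zero_apply]
      rw [show w ⬝ᵥ (fun j => U j m) = ∑ j, U j m * w j from
        Finset.sum_congr rfl fun j _ => mul_comm _ _]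
      exact hcoord m
    have hw0 : w = 0 := by
      have := congrArg (fun v => Matrix.vecMul v (star U)) hvm
      simp only [Matrix.vecMul_vecMul, hUU, Matrix.vecMul_one, Matrix.zero_vecMul] at this
      exact this
    have hws : ∑ j, w j = 1 := by
      rw [hw, Equiv.sum_comp e (fun v => K (φ x0) v)]
      exact hκ1 x0 hx0
    rw [hw0] at hws
    simp at hws
  -- build T and ν
  have hsnoc : ∀ x : Fin l → ℝ,
      φ x = (Fin.snoc x (0:ℝ) : Fin (l+1) → ℝ) + Pi.single (Fin.last l) 1 := by
    intro x
    funext i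
    induction i using Fin.lastCases with
    | last => simp [hφ, Fin.snoc_last]
    | cast j =>
      simp [hφ, Fin.snoc_castSucc, Pi.single_eq_of_ne (Fin.castSucc_lt_last j).ne]
  have hsnoclin : ∀ x : Fin l → ℝ,
      (Fin.snoc x (0:ℝ) : Fin (l+1) → ℝ)
        = ∑ k : Fin l, x k • (Fin.snoc (Pi.single k (1:ℝ)) 0 : Fin (l+1) → ℝ) := by
    intro x
    funext i
    rw [Finset.sum_apply]
    induction i using Fin.lastCases with
    | last => simp [Fin.snoc_last]
    | cast j =>
      simp only [Pi.smul_apply, Fin.snoc_castSucc, smul_eq_mul]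
      simp [Pi.single_apply]
  -- the affine map
  set T : Matrix (Fin (p + q)) (Fin l) ℝ := Matrix.of fun i k =>
    Real.sqrt |lam (σ i)| * ∑ j, U j (σ i) * K (Fin.snoc (Pi.single k (1:ℝ)) 0) (e j) with hT
  set ν : Fin (p + q) → ℝ := fun i =>
    Real.sqrt |lam (σ i)| * ∑ j, U j (σ i) * K (Pi.single (Fin.last l) (1:ℝ)) (e j) with hν
  have hKφ : ∀ (x : Fin l → ℝ) (v : ↑b), K (φ x) v
      = (∑ k, x k * K (Fin.snoc (Pi.single k (1:ℝ)) 0) v)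
        + K (Pi.single (Fin.last l) (1:ℝ)) v := by
    intro x v
    rw [hsnoc x, map_add, Finsupp.add_apply]
    congr 1
    rw [hsnoclin x, map_sum, Finsupp.finset_sum_apply]
    refine Finset.sum_congr rfl fun k _ => ?_
    rw [LinearMap.map_smul, Finsupp.smul_apply, smul_eq_mul]
  have hTg : ∀ (x : Fin l → ℝ) (i : Fin (p + q)),
      (T.mulVec x + ν) i = g x (σ i) := by
    intro x i
    have hmv : (T.mulVec x) i = ∑ k, T i k * x k := by
      simp [Matrix.mulVec, dotProduct]
    rw [Pi.add_apply, hmv, hg]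
    have expand : ∀ k, T i k * x k = ∑ j, Real.sqrt |lam (σ i)|
        * (U j (σ i) * (x k * K (Fin.snoc (Pi.single k (1:ℝ)) 0) (e j))) := by
      intro k
      simp only [hT, Matrix.of_apply, Finset.mul_sum, Finset.sum_mul]
      exact Finset.sum_congr rfl fun j _ => by ring
    rw [Finset.sum_congr rfl fun k (_ : k ∈ Finset.univ) => expand k, Finset.sum_comm]
    show (∑ j, ∑ k, Real.sqrt |lam (σ i)|
        * (U j (σ i) * (x k * K (Fin.snoc (Pi.single k (1:ℝ)) 0) (e j))))
      + (Real.sqrt |lam (σ i)| * ∑ j, U j (σ i) * K (Pi.single (Fin.last l) (1:ℝ)) (e j))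
      = Real.sqrt |lam (σ i)| * ∑ j, U j (σ i) * K (φ x) (e j)
    rw [Finset.mul_sum, ← Finset.sum_add_distrib, Finset.mul_sum]
    refine Finset.sum_congr rfl fun j _ => ?_
    rw [hKφ x (e j), mul_add, mul_add, Finset.mul_sum, Finset.mul_sum]
  refine ⟨p, q, hp1, by omega, T, ν, fun x hx y hy => ?_⟩
  rw [hform x hx y hy, ipq_dot,
    ← Equiv.sum_comp σ (fun m => (if 0 ≤ lam m then (1:ℝ) else -1) * (g x m * g y m))]
  refine Finset.sum_congr rfl fun i _ => ?_
  rw [hTg x i, hTg y i]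
  congr 1
  by_cases h : (i : ℕ) < p
  · rw [if_pos h, if_pos ((hσ i).mp h)]
  · rw [if_neg h, if_neg fun hh => h ((hσ i).mpr hh)]

/-- Theorem 1 (representation): a symmetric kernel `f : 𝒳 × 𝒳 → [0,1]` on a convex set
`𝒳 = conv(S) ⊆ ℝ^l` reproduces mixtures of connectivity behaviours from `S` iff there are
`p ≥ 1`, `q ≥ 0` with `d = p + q ≤ l + 1`, `T ∈ ℝ^{d×l}` and `ν ∈ ℝ^d` such that
`f(x,y) = (Tx + ν)ᵀ I_{p,q} (Ty + ν)` on `𝒳 × 𝒳`. -/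
theorem grdpg_representation (l : ℕ) (hl : 0 < l)
    (X S : Set (Fin l → ℝ)) (hSX : S ⊆ X) (hX : X = convexHull ℝ S)
    (hXconv : Convex ℝ X)
    (f : (Fin l → ℝ) → (Fin l → ℝ) → ℝ)
    (hrange : ∀ x ∈ X, ∀ y ∈ X, f x y ∈ Set.Icc (0 : ℝ) 1)
    (hsym : ∀ x ∈ X, ∀ y ∈ X, f x y = f y x) :
    ReproducesMixtures X S f ↔
      ∃ (p q : ℕ), 1 ≤ p ∧ p + q ≤ l + 1 ∧
        ∃ (T : Matrix (Fin (p + q)) (Fin l) ℝ) (ν : Fin (p + q) → ℝ),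
          ∀ x ∈ X, ∀ y ∈ X,
            f x y = (T.mulVec x + ν) ⬝ᵥ (Ipq p q).mulVec (T.mulVec y + ν) := by
  constructor
  · exact fun h => fwd_dir X S hSX hX f hrange hsym h
  · rintro ⟨p, q, hp, hpq, T, ν, hrep⟩
    exact rev_dir X S hSX hXconv f T ν hrep
end

section
/- Let l be a positive integer, 𝒳 a convex subset of ℝ^l that is the convex hull of a subset S ⊆ 𝒳, and f : 𝒳 × 𝒳 → [0,1] a symmetric function. Then f reproduces mixtures of connectivity behaviours from S if and only if there exists a symmetric bi-affine function g : aff(𝒳) × aff(𝒳) → ℝ whose restriction to 𝒳 × 𝒳 equals f. -/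
open scoped BigOperators
open Matrix

/-- `g` is bi-affine on a set `A` (in each argument, affine along lines within `A`). -/
def BiAffineOn {l : ℕ} (A : Set (Fin l → ℝ))
    (g : (Fin l → ℝ) → (Fin l → ℝ) → ℝ) : Prop :=
  (∀ x₁ ∈ A, ∀ x₂ ∈ A, ∀ y ∈ A, ∀ t : ℝ,
      g (t • x₁ + (1 - t) • x₂) y = t * g x₁ y + (1 - t) * g x₂ y) ∧
  (∀ x ∈ A, ∀ y₁ ∈ A, ∀ y₂ ∈ A, ∀ t : ℝ,
      g x (t • y₁ + (1 - t) • y₂) = t * g x y₁ + (1 - t) * g x y₂)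

/- ### Auxiliary lemmas -/

/-- An affine map into `ℝ` distributes over affine combinations written as sums of scalar
multiples. -/
private lemma affine_comb_apply {l : ℕ} (φ : (Fin l → ℝ) →ᵃ[ℝ] ℝ) {ι : Type*} [Fintype ι]
    (α : ι → ℝ) (u : ι → (Fin l → ℝ)) (hα : ∑ i, α i = 1) :
    φ (∑ i, α i • u i) = ∑ i, α i * φ (u i) := by
  have h0 : ∀ x, φ x = φ.linear x + φ 0 := fun x => by
    have := φ.map_vadd 0 x
    simpa using this
  have h2 : ∀ i, α i * φ (u i) = α i * φ.linear (u i) + α i * φ 0 := fun i => by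
    rw [h0 (u i)]; ring
  calc φ (∑ i, α i • u i)
      = φ.linear (∑ i, α i • u i) + φ 0 := h0 _
    _ = ∑ i, α i * φ.linear (u i) + φ 0 := by
        rw [map_sum]; simp_rw [LinearMap.map_smul, smul_eq_mul]
    _ = ∑ i, (α i * φ.linear (u i) + α i * φ 0) := by
        rw [Finset.sum_add_distrib, ← Finset.sum_mul, hα, one_mul]
    _ = ∑ i, α i * φ (u i) := Finset.sum_congr rfl fun i _ => (h2 i).symm

/-- An affine map into `ℝ` is affine along lines. -/
private lemma coord_combo {l : ℕ} (φ : (Fin l → ℝ) →ᵃ[ℝ] ℝ) (x₁ x₂ : Fin l → ℝ) (t : ℝ) :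
    φ (t • x₁ + (1 - t) • x₂) = t * φ x₁ + (1 - t) * φ x₂ := by
  have h : t • x₁ + (1 - t) • x₂ = AffineMap.lineMap x₂ x₁ t := by
    rw [AffineMap.lineMap_apply]
    simp only [vsub_eq_sub, vadd_eq_add]
    module
  rw [h, AffineMap.apply_lineMap, AffineMap.lineMap_apply]
  simp only [vsub_eq_sub, vadd_eq_add, smul_eq_mul]
  ring

/-- Reproducing mixtures, restated for an arbitrary finite index type. -/
private lemma RM_fintype {l : ℕ} {X S : Set (Fin l → ℝ)}
    {f : (Fin l → ℝ) → (Fin l → ℝ) → ℝ}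
    (hf : ReproducesMixtures X S f) {ι : Type*} [Fintype ι]
    (u : ι → (Fin l → ℝ)) (α : ι → ℝ) (hS : ∀ r, u r ∈ S)
    (h01 : ∀ r, 0 ≤ α r ∧ α r ≤ 1) (h1 : ∑ r, α r = 1) {y : Fin l → ℝ} (hy : y ∈ X) :
    f (∑ r, α r • u r) y = ∑ r, α r * f (u r) y := by
  classical
  let e := Fintype.equivFin ι
  have h1' : ∑ k, α (e.symm k) = 1 := by rw [Equiv.sum_comp e.symm α]; exact h1
  have key := hf (Fintype.card ι) (u ∘ e.symm) (α ∘ e.symm) (fun r => hS _) (fun r => h01 _)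
    h1' y hy
  have e1 : (∑ r, (α ∘ e.symm) r • (u ∘ e.symm) r) = ∑ r, α r • u r :=
    Equiv.sum_comp e.symm fun r => α r • u r
  have e2 : (∑ r, (α ∘ e.symm) r * f ((u ∘ e.symm) r) y) = ∑ r, α r * f (u r) y :=
    Equiv.sum_comp e.symm fun r => α r * f (u r) y
  rw [e1, e2] at key
  exact key

/-- Key zero-combination lemma: a vanishing affine relation among points of `S` (with real
coefficients summing to `0`) is reproduced by `f`. -/
private lemma keyzero {l : ℕ} {X S : Set (Fin l → ℝ)}
    (hX : X = convexHull ℝ S)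
    {f : (Fin l → ℝ) → (Fin l → ℝ) → ℝ}
    (hf : ReproducesMixtures X S f)
    {ι : Type*} [Fintype ι] (u : ι → (Fin l → ℝ)) (c : ι → ℝ)
    (hu : ∀ r, c r ≠ 0 → u r ∈ S) (h0 : ∑ r, c r • u r = 0) (hc : ∑ r, c r = 0)
    {v : Fin l → ℝ} (hv : v ∈ X) : ∑ r, c r * f (u r) v = 0 := by
  classical
  by_cases hall : ∀ r, c r = 0
  · simp [hall]
  push_neg at hall
  obtain ⟨r₀, hr₀⟩ := hall
  set P := ∑ r, max (c r) 0 with hP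
  have hmax : ∀ a : ℝ, max a 0 - max (-a) 0 = a := fun a =>
    max_zero_sub_max_neg_zero_eq_self a
  have hPN : ∑ r, max (-c r) 0 = P := by
    have h : P - ∑ r, max (-c r) 0 = 0 := by
      rw [hP, ← Finset.sum_sub_distrib]
      simp_rw [hmax]
      exact hc
    linarith
  have hPnn : 0 ≤ P := Finset.sum_nonneg fun r _ => le_max_right _ _
  have hP0 : P ≠ 0 := by
    intro h
    have h1 : ∀ r ∈ Finset.univ, max (c r) 0 = 0 :=
      (Finset.sum_eq_zero_iff_of_nonneg fun r _ => le_max_right (c r) 0).1 (hP ▸ h)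
    have h2 : ∀ r ∈ Finset.univ, max (-c r) 0 = 0 :=
      (Finset.sum_eq_zero_iff_of_nonneg fun r _ => le_max_right (-c r) 0).1 (by rw [hPN]; exact h)
    have h3 : c r₀ ≤ 0 := max_eq_right_iff.1 (h1 r₀ (Finset.mem_univ r₀))
    have h4 : -c r₀ ≤ 0 := max_eq_right_iff.1 (h2 r₀ (Finset.mem_univ r₀))
    exact hr₀ (le_antisymm h3 (by linarith))
  have hPpos : 0 < P := lt_of_le_of_ne hPnn (Ne.symm hP0)
  set u' : ι → (Fin l → ℝ) := fun r => if c r = 0 then u r₀ else u r with hu'def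
  set α : ι → ℝ := fun r => max (c r) 0 / P with hαdef
  set β : ι → ℝ := fun r => max (-c r) 0 / P with hβdef
  have hu'S : ∀ r, u' r ∈ S := fun r => by
    by_cases h : c r = 0
    · simp only [hu'def, if_pos h]; exact hu r₀ hr₀
    · simp only [hu'def, if_neg h]; exact hu r h
  have hα01 : ∀ r, 0 ≤ α r ∧ α r ≤ 1 := fun r =>
    ⟨div_nonneg (le_max_right _ _) hPnn,
      (div_le_one hPpos).2 (Finset.single_le_sum (fun i _ => le_max_right (c i) 0)
        (Finset.mem_univ r))⟩
  have hβ01 : ∀ r, 0 ≤ β r ∧ β r ≤ 1 := fun r =>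
    ⟨div_nonneg (le_max_right _ _) hPnn,
      (div_le_one hPpos).2 (by
        calc max (-c r) 0 ≤ ∑ i, max (-c i) 0 :=
              Finset.single_le_sum (fun i _ => le_max_right (-c i) 0) (Finset.mem_univ r)
          _ = P := hPN)⟩
  have hα1 : ∑ r, α r = 1 := by
    simp only [hαdef]
    rw [← Finset.sum_div, ← hP, div_self hP0]
  have hβ1 : ∑ r, β r = 1 := by
    simp only [hβdef]
    rw [← Finset.sum_div, hPN, div_self hP0]
  have hαβ : ∀ r, α r - β r = c r / P := fun r => by
    simp only [hαdef, hβdef]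
    rw [div_sub_div_same, hmax]
  have hxeq : ∑ r, α r • u' r = ∑ r, β r • u' r := by
    have hdiff : ∑ r, (α r • u' r - β r • u' r) = 0 := by
      have e1 : ∀ r, α r • u' r - β r • u' r = P⁻¹ • (c r • u r) := fun r => by
        by_cases h : c r = 0
        · simp [hαdef, hβdef, h]
        · rw [← sub_smul, hαβ r, hu'def]
          simp only [if_neg h]
          rw [smul_smul, div_eq_inv_mul]
      simp_rw [e1]
      rw [← Finset.smul_sum, h0, smul_zero]
    rw [Finset.sum_sub_distrib] at hdiff
    exact sub_eq_zero.mp hdiff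
  have hxX : (∑ r, α r • u' r) ∈ X := by
    rw [hX]
    exact (convex_convexHull ℝ S).sum_mem (fun i _ => (hα01 i).1) hα1
      (fun i _ => subset_convexHull ℝ S (hu'S i))
  have hA := RM_fintype hf u' α hu'S hα01 hα1 hv
  have hB := RM_fintype hf u' β hu'S hβ01 hβ1 hv
  rw [← hxeq] at hB
  have hAB : ∑ r, (α r - β r) * f (u' r) v = 0 := by
    simp_rw [sub_mul]
    rw [Finset.sum_sub_distrib, ← hA, ← hB, sub_self]
  have hfin : ∀ r, c r * f (u r) v = P * ((α r - β r) * f (u' r) v) := fun r => by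
    by_cases h : c r = 0
    · rw [h, hαβ r, h]
      simp
    · rw [hαβ r, hu'def]
      simp only [if_neg h]
      field_simp
  simp_rw [hfin]
  rw [← Finset.mul_sum, hAB, mul_zero]


/-- A barycentric coordinate for a basis point outside `t` vanishes on `affineSpan ℝ t`. -/
private lemma coord_vanish {l : ℕ} {T : Set (Fin l → ℝ)}
    (b : AffineBasis T ℝ (Fin l → ℝ)) (hb : ∀ i : T, b i = ↑i)
    {t : Set (Fin l → ℝ)} (htT : t ⊆ T) (j : T) (hj : (↑j : Fin l → ℝ) ∉ t)
    {x : Fin l → ℝ} (hx : x ∈ affineSpan ℝ t) : b.coord j x = 0 := by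
  classical
  let Z : AffineSubspace ℝ (Fin l → ℝ) :=
    { carrier := {p | b.coord j p = 0}
      smul_vsub_vadd_mem' := by
        intro c p₁ p₂ p₃ h₁ h₂ h₃
        have h₁' : b.coord j p₁ = 0 := h₁
        have h₂' : b.coord j p₂ = 0 := h₂
        have h₃' : b.coord j p₃ = 0 := h₃
        show b.coord j (c • (p₁ -ᵥ p₂) +ᵥ p₃) = 0
        rw [AffineMap.map_vadd, LinearMap.map_smul, AffineMap.linearMap_vsub, h₁', h₂', h₃']
        simp }
  have hle : affineSpan ℝ t ≤ Z := by
    rw [affineSpan_le]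
    intro p hp
    have hpT : p ∈ T := htT hp
    show b.coord j p = 0
    have hbp : b ⟨p, hpT⟩ = p := hb _
    rw [← hbp, AffineBasis.coord_apply, if_neg]
    rintro rfl
    exact hj hp
  exact hle hx

/-- Evaluation of a function affine along lines (within an affine span) at convex
combinations. -/
private lemma conv_eval {l : ℕ} {X : Set (Fin l → ℝ)} (hXconv : Convex ℝ X)
    (g : (Fin l → ℝ) → (Fin l → ℝ) → ℝ)
    (hg : ∀ x₁ ∈ (affineSpan ℝ X : Set (Fin l → ℝ)), ∀ x₂ ∈ (affineSpan ℝ X : Set (Fin l → ℝ)),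
      ∀ y ∈ (affineSpan ℝ X : Set (Fin l → ℝ)), ∀ t : ℝ,
      g (t • x₁ + (1 - t) • x₂) y = t * g x₁ y + (1 - t) * g x₂ y)
    {y : Fin l → ℝ} (hy : y ∈ (affineSpan ℝ X : Set (Fin l → ℝ))) :
    ∀ (m : ℕ) (u : Fin m → (Fin l → ℝ)) (α : Fin m → ℝ),
      (∀ r, u r ∈ X) → (∀ r, 0 ≤ α r) → ∑ r, α r = 1 →
      g (∑ r, α r • u r) y = ∑ r, α r * g (u r) y := by
  intro m
  induction m with
  | zero =>
    intro u α _ _ h1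
    simp at h1
  | succ m ih =>
    intro u α hu hα h1
    rw [Fin.sum_univ_castSucc (f := fun r => α r • u r),
      Fin.sum_univ_castSucc (f := fun r => α r * g (u r) y)]
    rw [Fin.sum_univ_castSucc (f := α)] at h1
    set c : ℝ := ∑ r : Fin m, α r.castSucc with hc
    by_cases h : c = 0
    · have hz : ∀ r : Fin m, α r.castSucc = 0 := fun r =>
        (Finset.sum_eq_zero_iff_of_nonneg fun i _ => hα _).1 (hc ▸ h) r (Finset.mem_univ r)
      have hlast : α (Fin.last m) = 1 := by rw [h] at h1; linarith
      simp [hz, hlast]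
    · have hc0 : 0 < c :=
        lt_of_le_of_ne (Finset.sum_nonneg fun i _ => hα _) (Ne.symm h)
      set α' : Fin m → ℝ := fun r => α r.castSucc / c with hα'
      set x' : Fin l → ℝ := ∑ r, α' r • u r.castSucc with hx'
      have hα'1 : ∑ r, α' r = 1 := by
        simp only [hα']
        rw [← Finset.sum_div, ← hc, div_self h]
      have hα'nn : ∀ r : Fin m, 0 ≤ α' r := fun r => div_nonneg (hα _) hc0.le
      have hx'X : x' ∈ X :=
        hXconv.sum_mem (fun i _ => hα'nn i) hα'1 (fun i _ => hu _)
      have hih := ih (fun r => u r.castSucc) α' (fun r => hu _) hα'nn hα'1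
      have hcc : c = 1 - α (Fin.last m) := by linarith
      have hsum : ∑ r : Fin m, α r.castSucc • u r.castSucc = (1 - α (Fin.last m)) • x' := by
        rw [← hcc, hx', Finset.smul_sum]
        refine Finset.sum_congr rfl fun r _ => ?_
        rw [smul_smul]
        congr 1
        simp only [hα']
        field_simp
      have hrw : ∑ r : Fin m, α r.castSucc • u r.castSucc + α (Fin.last m) • u (Fin.last m)
          = α (Fin.last m) • u (Fin.last m) + (1 - α (Fin.last m)) • x' := by
        rw [hsum, add_comm]
      rw [hrw, hg _ (subset_affineSpan ℝ X (hu _)) _ (subset_affineSpan ℝ X hx'X) _ hy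
        (α (Fin.last m)), hih, Finset.mul_sum]
      have hterm : ∀ r : Fin m, (1 - α (Fin.last m)) * (α' r * g (u r.castSucc) y)
          = α r.castSucc * g (u r.castSucc) y := fun r => by
        rw [← hcc]
        simp only [hα']
        field_simp
      simp_rw [hterm]
      ring

/-- Lemma 1 (bi-affine extension): a symmetric kernel `f : 𝒳 × 𝒳 → [0,1]` on a convex set
`𝒳 = conv(S) ⊆ ℝ^l` reproduces mixtures of connectivity behaviours from `S` iff it extends
to a symmetric bi-affine function `g : aff(𝒳) × aff(𝒳) → ℝ`. -/
theorem biaffine_extension (l : ℕ) (hl : 0 < l)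
    (X S : Set (Fin l → ℝ)) (hSX : S ⊆ X) (hX : X = convexHull ℝ S)
    (hXconv : Convex ℝ X)
    (f : (Fin l → ℝ) → (Fin l → ℝ) → ℝ)
    (hrange : ∀ x ∈ X, ∀ y ∈ X, f x y ∈ Set.Icc (0 : ℝ) 1)
    (hsym : ∀ x ∈ X, ∀ y ∈ X, f x y = f y x) :
    ReproducesMixtures X S f ↔
      ∃ g : (Fin l → ℝ) → (Fin l → ℝ) → ℝ,
        (∀ x ∈ (affineSpan ℝ X : Set (Fin l → ℝ)),
          ∀ y ∈ (affineSpan ℝ X : Set (Fin l → ℝ)), g x y = g y x) ∧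
        BiAffineOn (affineSpan ℝ X : Set (Fin l → ℝ)) g ∧
        (∀ x ∈ X, ∀ y ∈ X, g x y = f x y) := by
  constructor
  · -- Forward direction: construct the bi-affine extension via an affine basis.
    intro hf
    classical
    obtain ⟨t, htS, htsp, htind⟩ := exists_affineIndependent ℝ (Fin l → ℝ) S
    obtain ⟨T, htT, hTind, hTtop⟩ := exists_subset_affineIndependent_affineSpan_eq_top htind
    haveI : Fintype T := (finite_set_of_fin_dim_affineIndependent ℝ hTind).fintype
    let b : AffineBasis T ℝ (Fin l → ℝ) := ⟨Subtype.val, hTind, by rwa [Subtype.range_coe]⟩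
    have hb : ∀ i : T, b i = ↑i := fun i => rfl
    have hspanX : (affineSpan ℝ X : AffineSubspace ℝ (Fin l → ℝ)) = affineSpan ℝ t := by
      rw [hX, affineSpan_convexHull, ← htsp]
    have hvanish : ∀ j : T, (↑j : Fin l → ℝ) ∉ t → ∀ x ∈ X, b.coord j x = 0 := by
      intro j hj x hx
      exact coord_vanish b hb htT j hj (hspanX ▸ subset_affineSpan ℝ X hx)
    set F : T → T → ℝ :=
      fun i j => if (↑i : Fin l → ℝ) ∈ S ∧ (↑j : Fin l → ℝ) ∈ S then f ↑i ↑j else 0 with hF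
    -- The main claim: affine expansion of `f` through the basis coordinates.
    have claim : ∀ yy ∈ X, ∀ v ∈ X, ∑ i : T, b.coord i yy * f ↑i v = f yy v := by
      intro yy hyy v hv
      have hyy' : yy ∈ convexHull ℝ S := hX ▸ hyy
      rw [convexHull_eq] at hyy'
      obtain ⟨ι', tt, w, z, hw0, hw1, hz, hyc⟩ := hyy'
      set w' : {a // a ∈ tt} → ℝ := fun a => w ↑a with hw'
      set z' : {a // a ∈ tt} → (Fin l → ℝ) := fun a => z ↑a with hz'
      have hy1 : ∑ a, w' a = 1 := by
        rw [hw', Finset.sum_coe_sort tt w]; exact hw1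
      have hyeq : ∑ a, w' a • z' a = yy := by
        rw [show (∑ a, w' a • z' a) = ∑ i ∈ tt, w i • z i from
          Finset.sum_coe_sort tt (fun i => w i • z i)]
        rw [← Finset.centerMass_eq_of_sum_1 tt z hw1]
        exact hyc
      have stepa : f yy v = ∑ a, w' a * f (z' a) v := by
        have h01 : ∀ a : {a // a ∈ tt}, 0 ≤ w' a ∧ w' a ≤ 1 := fun a =>
          ⟨hw0 _ a.2, le_trans (Finset.single_le_sum (fun i hi => hw0 i hi) a.2) hw1.le⟩
        have := RM_fintype hf z' w' (fun a => hz _ a.2) h01 hy1 hv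
        rw [hyeq] at this
        exact this
      -- zero-combination between the two representations of `yy`
      set uu : T ⊕ {a // a ∈ tt} → (Fin l → ℝ) :=
        Sum.elim (fun i : T => (↑i : Fin l → ℝ)) z' with huu
      set cc : T ⊕ {a // a ∈ tt} → ℝ :=
        Sum.elim (fun i : T => b.coord i yy) (fun a => - w' a) with hcc
      have hrep : ∑ i : T, b.coord i yy • (↑i : Fin l → ℝ) = yy := by
        have := b.linear_combination_coord_eq_self yy
        simpa [hb] using this
      have h0 : ∑ r, cc r • uu r = 0 := by
        rw [Fintype.sum_sum_type]
        simp only [hcc, huu, Sum.elim_inl, Sum.elim_inr, neg_smul]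
        rw [Finset.sum_neg_distrib, hrep, hyeq]
        simp
      have hc0 : ∑ r, cc r = 0 := by
        rw [Fintype.sum_sum_type]
        simp only [hcc, Sum.elim_inl, Sum.elim_inr]
        rw [Finset.sum_neg_distrib, b.sum_coord_apply_eq_one yy, hy1]
        simp
      have hSmem : ∀ r, cc r ≠ 0 → uu r ∈ S := by
        rintro (i | a) h
        · by_contra hiS
          have hit : (↑i : Fin l → ℝ) ∉ t := fun hit => hiS (htS hit)
          exact h (hvanish i hit yy hyy)
        · exact hz _ a.2
      have hkz := keyzero hX hf uu cc hSmem h0 hc0 hv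
      rw [Fintype.sum_sum_type] at hkz
      simp only [hcc, huu, Sum.elim_inl, Sum.elim_inr, neg_mul] at hkz
      rw [Finset.sum_neg_distrib] at hkz
      have : ∑ i : T, b.coord i yy * f (↑i) v = ∑ a, w' a * f (z' a) v := by linarith
      rw [this, ← stepa]
    refine ⟨fun x y => ∑ i : T, ∑ j : T, b.coord i x * b.coord j y * F i j, ?_, ⟨?_, ?_⟩, ?_⟩
    · -- symmetry
      intro x _ y _
      dsimp only
      rw [Finset.sum_comm]
      refine Finset.sum_congr rfl fun a _ => Finset.sum_congr rfl fun c _ => ?_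
      have hFsym : F c a = F a c := by
        by_cases h : (↑a : Fin l → ℝ) ∈ S ∧ (↑c : Fin l → ℝ) ∈ S
        · simp only [hF, if_pos h, if_pos (And.intro h.2 h.1)]
          exact hsym _ (hSX h.2) _ (hSX h.1)
        · have h' : ¬((↑c : Fin l → ℝ) ∈ S ∧ (↑a : Fin l → ℝ) ∈ S) := fun hh => h ⟨hh.2, hh.1⟩
          simp only [hF, if_neg h, if_neg h']
      rw [hFsym]
      ring
    · -- affine in the first slot
      intro x₁ _ x₂ _ y _ s
      dsimp only
      have hcoord : ∀ i : T, b.coord i (s • x₁ + (1 - s) • x₂)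
          = s * b.coord i x₁ + (1 - s) * b.coord i x₂ := fun i => coord_combo (b.coord i) x₁ x₂ s
      calc ∑ i : T, ∑ j : T, b.coord i (s • x₁ + (1 - s) • x₂) * b.coord j y * F i j
          = ∑ i : T, ∑ j : T, (s * (b.coord i x₁ * b.coord j y * F i j)
              + (1 - s) * (b.coord i x₂ * b.coord j y * F i j)) := by
            refine Finset.sum_congr rfl fun i _ => Finset.sum_congr rfl fun j _ => ?_
            rw [hcoord i]
            ring
        _ = s * ∑ i : T, ∑ j : T, b.coord i x₁ * b.coord j y * F i j
              + (1 - s) * ∑ i : T, ∑ j : T, b.coord i x₂ * b.coord j y * F i j := by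
            rw [Finset.mul_sum, Finset.mul_sum, ← Finset.sum_add_distrib]
            refine Finset.sum_congr rfl fun i _ => ?_
            rw [Finset.mul_sum, Finset.mul_sum, ← Finset.sum_add_distrib]
    · -- affine in the second slot
      intro x _ y₁ _ y₂ _ s
      dsimp only
      have hcoord : ∀ j : T, b.coord j (s • y₁ + (1 - s) • y₂)
          = s * b.coord j y₁ + (1 - s) * b.coord j y₂ := fun j => coord_combo (b.coord j) y₁ y₂ s
      calc ∑ i : T, ∑ j : T, b.coord i x * b.coord j (s • y₁ + (1 - s) • y₂) * F i j
          = ∑ i : T, ∑ j : T, (s * (b.coord i x * b.coord j y₁ * F i j)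
              + (1 - s) * (b.coord i x * b.coord j y₂ * F i j)) := by
            refine Finset.sum_congr rfl fun i _ => Finset.sum_congr rfl fun j _ => ?_
            rw [hcoord j]
            ring
        _ = s * ∑ i : T, ∑ j : T, b.coord i x * b.coord j y₁ * F i j
              + (1 - s) * ∑ i : T, ∑ j : T, b.coord i x * b.coord j y₂ * F i j := by
            rw [Finset.mul_sum, Finset.mul_sum, ← Finset.sum_add_distrib]
            refine Finset.sum_congr rfl fun i _ => ?_
            rw [Finset.mul_sum, Finset.mul_sum, ← Finset.sum_add_distrib]
    · -- agreement on `X × X`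
      intro x hx y hy
      dsimp only
      have hg1 : (∑ i : T, ∑ j : T, b.coord i x * b.coord j y * F i j)
          = ∑ i : T, b.coord i x * f ↑i y := by
        refine Finset.sum_congr rfl fun i _ => ?_
        by_cases hiS : (↑i : Fin l → ℝ) ∈ S
        · have hinner : ∑ j : T, b.coord i x * b.coord j y * F i j
              = b.coord i x * ∑ j : T, b.coord j y * f ↑j ↑i := by
            rw [Finset.mul_sum]
            refine Finset.sum_congr rfl fun j _ => ?_
            by_cases hjS : (↑j : Fin l → ℝ) ∈ S
            · simp only [hF, if_pos (And.intro hiS hjS)]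
              rw [hsym (↑i) (hSX hiS) (↑j) (hSX hjS)]
              ring
            · have hcj : b.coord j y = 0 := hvanish j (fun hjt => hjS (htS hjt)) y hy
              simp [hF, hcj, hjS]
          rw [hinner, claim y hy (↑i) (hSX hiS), hsym y hy (↑i) (hSX hiS)]
        · have hci : b.coord i x = 0 := hvanish i (fun hit => hiS (htS hit)) x hx
          simp [hci]
      rw [hg1, claim x hx y hy]
  · -- Backward direction
    rintro ⟨g, hgsym, ⟨hg1, hg2⟩, hgf⟩
    intro m u α hu hα h1 y hy
    have hyA : y ∈ (affineSpan ℝ X : Set (Fin l → ℝ)) := subset_affineSpan ℝ X hy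
    have hxX : (∑ r, α r • u r) ∈ X :=
      hXconv.sum_mem (fun i _ => (hα i).1) h1 (fun i _ => hSX (hu i))
    have hev := conv_eval hXconv g hg1 hyA m u α (fun r => hSX (hu r)) (fun r => (hα r).1) h1
    rw [show f (∑ r, α r • u r) y = g (∑ r, α r • u r) y from (hgf _ hxX _ hy).symm, hev]
    exact Finset.sum_congr rfl fun r _ => by rw [hgf _ (hSX (hu r)) _ hy]
end

section
/- Let 𝒳 be a nonempty subset of ℝ^l, let ℓ = dim(aff(𝒳)) ≤ l be the dimension of the affine hull of 𝒳, and let g : aff(𝒳) × aff(𝒳) → ℝ be a bi-affine function. Then there exist a matrix R ∈ ℝ^{(ℓ+1)×l}, a vector μ ∈ ℝ^{ℓ+1}, and a bilinear form h : ℝ^{ℓ+1} × ℝ^{ℓ+1} → ℝ such that g(x,y) = h(Rx + μ, Ry + μ) for all x, y ∈ aff(𝒳). -/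
open scoped BigOperators
open Matrix

/-- `f` is affine along lines within `A`. -/
def LineAffineOn {l : ℕ} (A : Set (Fin l → ℝ)) (f : (Fin l → ℝ) → ℝ) : Prop :=
  ∀ x ∈ A, ∀ y ∈ A, ∀ t : ℝ, f (t • x + (1 - t) • y) = t * f x + (1 - t) * f y

lemma add_dir_mem {l : ℕ} {S : AffineSubspace ℝ (Fin l → ℝ)} {p v : Fin l → ℝ}
    (hp : p ∈ S) (hv : v ∈ S.direction) : p + v ∈ S := by
  have := AffineSubspace.vadd_mem_of_mem_direction hv hp
  simpa [vadd_eq_add, add_comm] using this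

lemma comb_mem {l : ℕ} {S : AffineSubspace ℝ (Fin l → ℝ)} {a b : Fin l → ℝ}
    (ha : a ∈ S) (hb : b ∈ S) (t : ℝ) : t • a + (1 - t) • b ∈ S := by
  have hd : t • (a - b) ∈ S.direction :=
    Submodule.smul_mem _ t (by simpa using AffineSubspace.vsub_mem_direction ha hb)
  have := add_dir_mem hb hd
  convert this using 1
  module

lemma lineAffine_translate {l : ℕ} {S : AffineSubspace ℝ (Fin l → ℝ)}
    {f : (Fin l → ℝ) → ℝ} (hf : LineAffineOn (S : Set (Fin l → ℝ)) f)
    {p q v : Fin l → ℝ} (hp : p ∈ S) (hq : q ∈ S) (hv : v ∈ S.direction) :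
    f (q + v) = f q + f (p + v) - f p := by
  have hpv : p + v ∈ S := add_dir_mem hp hv
  set m := (1/2 : ℝ) • (p + v) + (1 - 1/2 : ℝ) • q with hm
  have hmS : m ∈ S := comb_mem hpv hq _
  have h1 : f m = (1/2 : ℝ) * f (p + v) + (1 - 1/2 : ℝ) * f q := hf _ hpv _ hq _
  have h2 : f ((2:ℝ) • m + (1 - 2 : ℝ) • p) = 2 * f m + (1 - 2 : ℝ) * f p := hf _ hmS _ hp _
  have h3 : (2:ℝ) • m + (1 - 2 : ℝ) • p = q + v := by rw [hm]; module
  rw [h3] at h2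
  rw [h2, h1]; ring

lemma lineAffine_expand {l n : ℕ} {S : AffineSubspace ℝ (Fin l → ℝ)}
    {f : (Fin l → ℝ) → ℝ} (hf : LineAffineOn (S : Set (Fin l → ℝ)) f)
    {p₀ : Fin l → ℝ} (hp₀ : p₀ ∈ S) (v : Fin n → Fin l → ℝ)
    (hv : ∀ i, v i ∈ S.direction) (c : Fin n → ℝ) (s : Finset (Fin n)) :
    f (p₀ + ∑ i ∈ s, c i • v i) = f p₀ + ∑ i ∈ s, c i * (f (p₀ + v i) - f p₀) := by
  classical
  induction s using Finset.induction with
  | empty => simp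
  | @insert a s hna ih =>
    rw [Finset.sum_insert hna, Finset.sum_insert hna]
    have hw : (∑ i ∈ s, c i • v i) ∈ S.direction :=
      Submodule.sum_mem _ (fun i _ => Submodule.smul_mem _ _ (hv i))
    have hq : p₀ + ∑ i ∈ s, c i • v i ∈ S := add_dir_mem hp₀ hw
    have key : p₀ + (c a • v a + ∑ i ∈ s, c i • v i)
        = (c a) • ((p₀ + ∑ i ∈ s, c i • v i) + v a)
          + (1 - c a) • (p₀ + ∑ i ∈ s, c i • v i) := by module
    rw [key, hf _ (add_dir_mem hq (hv a)) _ hq (c a),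
      lineAffine_translate hf hp₀ hq (hv a), ih]
    ring

/-- Lemma 2 (homogenisation): if `g` is bi-affine on `aff(𝒳)` for a nonempty `𝒳 ⊆ ℝ^l` with
`ℓ = dim aff(𝒳)`, then there are `R ∈ ℝ^{(ℓ+1)×l}`, `μ ∈ ℝ^{ℓ+1}` and a bilinear form `h` on
`ℝ^{ℓ+1}` with `g(x,y) = h(Rx + μ, Ry + μ)` on `aff(𝒳) × aff(𝒳)`. -/
theorem biaffine_homogenisation (l : ℕ) (X : Set (Fin l → ℝ)) (hXne : X.Nonempty)
    (ℓ : ℕ) (hℓ : ℓ = Module.finrank ℝ (affineSpan ℝ X).direction) (hℓl : ℓ ≤ l)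
    (g : (Fin l → ℝ) → (Fin l → ℝ) → ℝ)
    (hg : BiAffineOn (affineSpan ℝ X : Set (Fin l → ℝ)) g) :
    ∃ (R : Matrix (Fin (ℓ + 1)) (Fin l) ℝ) (μ : Fin (ℓ + 1) → ℝ)
      (h : (Fin (ℓ + 1) → ℝ) →ₗ[ℝ] (Fin (ℓ + 1) → ℝ) →ₗ[ℝ] ℝ),
      ∀ x ∈ (affineSpan ℝ X : Set (Fin l → ℝ)),
        ∀ y ∈ (affineSpan ℝ X : Set (Fin l → ℝ)),
          g x y = h (R.mulVec x + μ) (R.mulVec y + μ) := by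
  classical
  obtain ⟨p₀, hp₀X⟩ := hXne
  set S := affineSpan ℝ X with hS
  have hp₀ : p₀ ∈ S := subset_affineSpan ℝ X hp₀X
  set V := S.direction with hV
  have hBr : Module.finrank ℝ V = ℓ := hℓ.symm
  let B : Module.Basis (Fin ℓ) ℝ V := Module.finBasisOfFinrankEq ℝ V hBr
  obtain ⟨W, hW⟩ := Submodule.exists_isCompl V
  let π : (Fin l → ℝ) →ₗ[ℝ] V := V.projectionOnto W hW
  let Q : (Fin l → ℝ) →ₗ[ℝ] (Fin ℓ → ℝ) :=
    (Finsupp.linearEquivFunOnFinite ℝ ℝ (Fin ℓ)).toLinearMap ∘ₗ B.repr.toLinearMap ∘ₗ π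
  have hQdef : ∀ z, Q z = fun i => B.repr (π z) i := fun z => rfl
  let E : (Fin ℓ → ℝ) →ₗ[ℝ] (Fin (ℓ+1) → ℝ) :=
    { toFun := fun c k => if h : (k : ℕ) < ℓ then c ⟨k, h⟩ else -∑ i, c i
      map_add' := by
        intro a b; funext k
        by_cases h : (k : ℕ) < ℓ <;> simp [h, Finset.sum_add_distrib, neg_add, add_comm]
      map_smul' := by
        intro t a; funext k
        by_cases h : (k : ℕ) < ℓ <;> simp [h, Finset.mul_sum] }
  let L : (Fin l → ℝ) →ₗ[ℝ] (Fin (ℓ+1) → ℝ) := E ∘ₗ Q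
  let μ : Fin (ℓ+1) → ℝ := fun k =>
    if h : (k : ℕ) < ℓ then -(Q p₀ ⟨k, h⟩) else 1 + ∑ i, Q p₀ i
  let P : Fin (ℓ+1) → (Fin l → ℝ) := fun k =>
    if h : (k : ℕ) < ℓ then p₀ + (B ⟨k, h⟩ : Fin l → ℝ) else p₀
  have hPmem : ∀ k, P k ∈ S := by
    intro k
    by_cases h : (k : ℕ) < ℓ
    · simpa [P, h] using add_dir_mem hp₀ (B ⟨k, h⟩).2
    · simpa [P, h] using hp₀
  have key : ∀ f : (Fin l → ℝ) → ℝ, LineAffineOn (S : Set (Fin l → ℝ)) f →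
      ∀ x ∈ S, f x = ∑ k, (L x + μ) k * f (P k) := by
    intro f hf x hx
    have hxp : x - p₀ ∈ V := by
      simpa using AffineSubspace.vsub_mem_direction hx hp₀
    set c : Fin ℓ → ℝ := fun i => B.repr ⟨x - p₀, hxp⟩ i with hc
    have hπ : π (x - p₀) = ⟨x - p₀, hxp⟩ := Submodule.projectionOnto_apply_left hW ⟨x - p₀, hxp⟩
    have hQx : ∀ i, Q x i - Q p₀ i = c i := by
      intro i
      have h1 : Q x i - Q p₀ i = Q (x - p₀) i := by
        rw [map_sub]; rfl
      rw [h1, hQdef, hπ]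
    have hxeq : x = p₀ + ∑ i, c i • (B i : Fin l → ℝ) := by
      have h2 := B.sum_repr ⟨x - p₀, hxp⟩
      have h3 : ((∑ i, B.repr ⟨x - p₀, hxp⟩ i • B i : V) : Fin l → ℝ) = x - p₀ := by
        rw [h2]
      rw [Submodule.coe_sum] at h3
      simp only [SetLike.val_smul] at h3
      rw [hc]
      rw [h3]
      abel
    have hexp : f x = f p₀ + ∑ i, c i * (f (p₀ + (B i : Fin l → ℝ)) - f p₀) := by
      conv_lhs => rw [hxeq]
      exact lineAffine_expand hf hp₀ _ (fun i => (B i).2) c Finset.univ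
    have hLμ : ∀ i : Fin ℓ, (L x + μ) (Fin.castSucc i) = c i := by
      intro i
      have h : ((Fin.castSucc i : Fin (ℓ+1)) : ℕ) < ℓ := i.isLt
      have he : (⟨((Fin.castSucc i : Fin (ℓ+1)) : ℕ), h⟩ : Fin ℓ) = i := by
        ext; simp
      simp only [L, E, Pi.add_apply, LinearMap.comp_apply, LinearMap.coe_mk, AddHom.coe_mk,
        μ, dif_pos h, he]
      rw [← hQx i]
      ring
    have hLμl : (L x + μ) (Fin.last ℓ) = 1 - ∑ i, c i := by
      have h : ¬ ((Fin.last ℓ : Fin (ℓ+1)) : ℕ) < ℓ := by simp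
      simp only [L, E, Pi.add_apply, LinearMap.comp_apply, LinearMap.coe_mk, AddHom.coe_mk,
        μ, dif_neg h]
      have : ∑ i, c i = ∑ i, (Q x i - Q p₀ i) := by
        exact Finset.sum_congr rfl fun i _ => (hQx i).symm
      rw [this, Finset.sum_sub_distrib]
      ring
    have hPc : ∀ i : Fin ℓ, P (Fin.castSucc i) = p₀ + (B i : Fin l → ℝ) := by
      intro i
      have h : ((Fin.castSucc i : Fin (ℓ+1)) : ℕ) < ℓ := i.isLt
      have he : (⟨((Fin.castSucc i : Fin (ℓ+1)) : ℕ), h⟩ : Fin ℓ) = i := by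
        ext; simp
      simp only [P, dif_pos h, he]
    have hPl : P (Fin.last ℓ) = p₀ := by
      have h : ¬ ((Fin.last ℓ : Fin (ℓ+1)) : ℕ) < ℓ := by simp
      simp only [P, dif_neg h]
    rw [Fin.sum_univ_castSucc]
    simp only [hLμ, hLμl, hPc, hPl]
    rw [hexp]
    simp only [mul_sub, Finset.sum_sub_distrib, sub_mul, one_mul, Finset.sum_mul]
    ring
  refine ⟨LinearMap.toMatrix' L, μ,
    Matrix.toLinearMap₂' ℝ (Matrix.of fun k m => g (P k) (P m)), ?_⟩
  intro x hx y hy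
  have hmul : ∀ z, (LinearMap.toMatrix' L).mulVec z = L z := by
    intro z
    rw [← Matrix.toLin'_apply, Matrix.toLin'_toMatrix']
  rw [hmul, hmul, Matrix.toLinearMap₂'_apply]
  have hx1 : g x y = ∑ k, (L x + μ) k * g (P k) y :=
    key (fun z => g z y) (fun a ha b hb t => hg.1 a ha b hb y hy t) x hx
  rw [hx1]
  refine Finset.sum_congr rfl fun k _ => ?_
  have hy1 : g (P k) y = ∑ m, (L y + μ) m * g (P k) (P m) :=
    key (fun z => g (P k) z) (fun a ha b hb t => hg.2 (P k) (hPmem k) a ha b hb t) y hy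
  rw [hy1, Finset.mul_sum]
  refine Finset.sum_congr rfl fun m _ => ?_
  simp [Matrix.of_apply, smul_eq_mul, mul_assoc]
end

section
/- Let U, V ∈ ℝ^{n×p} have orthonormal columns, i.e. UᵀU = VᵀV = I_p. Then there exists an orthogonal matrix W ∈ ℝ^{p×p} (namely W = W₁W₂ᵀ where UᵀV = W₁ Σ W₂ᵀ is a singular value decomposition of UᵀV) such that ‖UᵀV − W‖_F ≤ ‖UUᵀ − VVᵀ‖_F², where ‖·‖_F denotes the Frobenius norm. -/
open scoped BigOperators
open Matrix

/-- The Frobenius norm of a matrix. -/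
noncomputable def frobNorm {n p : ℕ} (M : Matrix (Fin n) (Fin p) ℝ) : ℝ :=
  Real.sqrt (∑ i, ∑ j, (M i j) ^ 2)

lemma frobNorm_nonneg {n p : ℕ} (M : Matrix (Fin n) (Fin p) ℝ) : 0 ≤ frobNorm M :=
  Real.sqrt_nonneg _

lemma frobNorm_sq {n p : ℕ} (M : Matrix (Fin n) (Fin p) ℝ) :
    frobNorm M ^ 2 = Matrix.trace (Mᵀ * M) := by
  have h0 : (0:ℝ) ≤ ∑ i, ∑ j, (M i j) ^ 2 :=
    Finset.sum_nonneg fun i _ => Finset.sum_nonneg fun j _ => sq_nonneg _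
  rw [frobNorm, Real.sq_sqrt h0, Matrix.trace]
  rw [Finset.sum_comm]
  congr 1
  ext j
  simp [Matrix.diag, Matrix.mul_apply, pow_two]

lemma conjT_eq_transpose {a b : ℕ} (X : Matrix (Fin a) (Fin b) ℝ) : Xᴴ = Xᵀ := by
  ext i j; simp [Matrix.conjTranspose_apply]

/-- Polar factor bound: if `1 - MᵀM` is PSD (singular values of `M` at most 1), then there is an
orthogonal `W` with `‖M - W‖_F ≤ 2 tr(1 - MᵀM)`. -/
lemma polar_bound {p : ℕ} (M : Matrix (Fin p) (Fin p) ℝ)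
    (h1 : (1 - Mᵀ * M).PosSemidef) :
    ∃ W : Matrix (Fin p) (Fin p) ℝ, Wᵀ * W = 1 ∧
      frobNorm (M - W) ≤ 2 * Matrix.trace (1 - Mᵀ * M) := by
  have hA : (Mᵀ * M).IsHermitian := by
    unfold Matrix.IsHermitian
    rw [conjT_eq_transpose, Matrix.transpose_mul, Matrix.transpose_transpose]
  set lam : Fin p → ℝ := hA.eigenvalues with hlam
  set Q : Matrix (Fin p) (Fin p) ℝ := (hA.eigenvectorUnitary : Matrix (Fin p) (Fin p) ℝ)
    with hQdef
  have hQ1 : Qᵀ * Q = 1 := by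
    rw [← conjT_eq_transpose, ← Matrix.star_eq_conjTranspose]
    exact (Matrix.mem_unitaryGroup_iff').mp hA.eigenvectorUnitary.2
  have hQ2 : Q * Qᵀ = 1 := by
    rw [← conjT_eq_transpose, ← Matrix.star_eq_conjTranspose]
    exact (Matrix.mem_unitaryGroup_iff).mp hA.eigenvectorUnitary.2
  have hdiag : Qᵀ * (Mᵀ * M) * Q = Matrix.diagonal lam := by
    have := hA.conjStarAlgAut_star_eigenvectorUnitary
    rw [Unitary.conjStarAlgAut_star_apply, Matrix.star_eq_conjTranspose, conjT_eq_transpose] at this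
    simpa using this
  have hApsd : (Mᵀ * M).PosSemidef := by
    have := Matrix.posSemidef_conjTranspose_mul_self M
    rwa [conjT_eq_transpose] at this
  have hlam_nonneg : ∀ i, 0 ≤ lam i := by
    intro i
    have h := hApsd.conjTranspose_mul_mul_same Q
    rw [conjT_eq_transpose, hdiag] at h
    exact (Matrix.posSemidef_diagonal_iff.mp h) i
  have hcong : Qᵀ * (1 - Mᵀ * M) * Q = Matrix.diagonal (fun i => 1 - lam i) := by
    rw [Matrix.mul_sub, Matrix.mul_one, Matrix.sub_mul, hdiag, hQ1]
    rw [← Matrix.diagonal_one, Matrix.diagonal_sub]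
  have hlam_le_one : ∀ i, lam i ≤ 1 := by
    intro i
    have h := h1.conjTranspose_mul_mul_same Q
    rw [conjT_eq_transpose, hcong] at h
    have := (Matrix.posSemidef_diagonal_iff.mp h) i
    linarith
  set sig : Fin p → ℝ := fun i => Real.sqrt (lam i) with hsig
  obtain ⟨N, hNdef⟩ : ∃ X, X = M * Q := ⟨_, rfl⟩
  have hNN : Nᵀ * N = Matrix.diagonal lam := by
    rw [hNdef, Matrix.transpose_mul, Matrix.mul_assoc Qᵀ Mᵀ (M * Q),
      ← Matrix.mul_assoc Mᵀ M Q, ← Matrix.mul_assoc Qᵀ (Mᵀ * M) Q, hdiag]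
  have hNcol : ∀ i j : Fin p, (∑ k, N k i * N k j) = Matrix.diagonal lam i j := by
    intro i j
    rw [← hNN, Matrix.mul_apply]
    simp [Matrix.transpose_apply]
  set s : Set (Fin p) := {i | lam i ≠ 0} with hs
  set v : Fin p → EuclideanSpace ℝ (Fin p) := fun i => WithLp.toLp 2 (fun k => (sig i)⁻¹ * N k i) with hv
  have hsig_nonneg : ∀ i, 0 ≤ sig i := fun i => Real.sqrt_nonneg _
  have hsig_pos : ∀ i ∈ s, 0 < sig i := by
    intro i hi
    exact Real.sqrt_pos.mpr (lt_of_le_of_ne (hlam_nonneg i) (Ne.symm hi))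
  have hortho : Orthonormal ℝ (s.restrict v) := by
    rw [orthonormal_iff_ite]
    rintro ⟨i, hi⟩ ⟨j, hj⟩
    have hinner : (inner ℝ (v i) (v j) : ℝ) = (sig i)⁻¹ * (sig j)⁻¹ * (∑ k, N k i * N k j) := by
      rw [PiLp.inner_apply]
      simp only [RCLike.inner_apply', conj_trivial]
      rw [Finset.mul_sum]
      apply Finset.sum_congr rfl
      intro k _
      show ((sig i)⁻¹ * N k i) * ((sig j)⁻¹ * N k j) = _
      ring
    show inner ℝ (v i) (v j) = _
    rw [hinner, hNcol]
    by_cases hij : i = j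
    · subst hij
      simp only [Matrix.diagonal_apply_eq, if_pos rfl, Subtype.mk.injEq]
      have hsp := hsig_pos i hi
      have h2 : lam i = sig i * sig i := (Real.mul_self_sqrt (hlam_nonneg i)).symm
      rw [h2, if_pos trivial]
      field_simp
    · rw [Matrix.diagonal_apply_ne _ hij, if_neg (by simp [Subtype.mk.injEq, hij])]
      ring
  obtain ⟨b, hb⟩ := hortho.exists_orthonormalBasis_extension_of_card_eq
    (by simp [finrank_euclideanSpace])
  obtain ⟨W₁, hW₁⟩ : ∃ X : Matrix (Fin p) (Fin p) ℝ, X = fun k i => b i k := ⟨_, rfl⟩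
  have hW₁orth : W₁ᵀ * W₁ = 1 := by
    ext i j
    rw [Matrix.mul_apply]
    have h3 := (orthonormal_iff_ite.mp b.orthonormal) i j
    rw [PiLp.inner_apply] at h3
    simp only [RCLike.inner_apply', conj_trivial] at h3
    simpa [Matrix.transpose_apply, hW₁, Matrix.one_apply, Matrix.transpose] using h3
  have hNzero : ∀ i, lam i = 0 → ∀ k, N k i = 0 := by
    intro i h0 k
    have hsum : (∑ k, N k i * N k i) = 0 := by rw [hNcol]; simp [h0]
    have := (Finset.sum_eq_zero_iff_of_nonneg (fun k _ => mul_self_nonneg (N k i))).mp hsum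
      k (Finset.mem_univ k)
    exact (mul_self_eq_zero).mp this
  have hMQ : N = W₁ * Matrix.diagonal sig := by
    ext k i
    rw [Matrix.mul_diagonal]
    by_cases hi : lam i = 0
    · have hsi : sig i = 0 := by rw [hsig]; simp [hi]
      rw [hsi, mul_zero]
      exact hNzero i hi k
    · have hbi : b i = v i := hb i hi
      have hWki : W₁ k i = (sig i)⁻¹ * N k i := by
        rw [hW₁]
        show b i k = (sig i)⁻¹ * N k i
        rw [hbi]
      rw [hWki]
      have := (hsig_pos i hi).ne'
      field_simp
  have hMeq : M = W₁ * Matrix.diagonal sig * Qᵀ := by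
    calc M = M * (Q * Qᵀ) := by rw [hQ2, Matrix.mul_one]
      _ = (M * Q) * Qᵀ := by rw [Matrix.mul_assoc]
      _ = N * Qᵀ := by rw [← hNdef]
      _ = W₁ * Matrix.diagonal sig * Qᵀ := by rw [hMQ]
  refine ⟨W₁ * Qᵀ, ?_, ?_⟩
  · rw [Matrix.transpose_mul, Matrix.transpose_transpose, Matrix.mul_assoc,
      ← Matrix.mul_assoc W₁ᵀ, hW₁orth, Matrix.one_mul, hQ2]
  have hdiff : M - W₁ * Qᵀ = W₁ * Matrix.diagonal (fun i => sig i - 1) * Qᵀ := by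
    have hd : Matrix.diagonal (fun i => sig i - 1)
        = Matrix.diagonal sig - (1 : Matrix (Fin p) (Fin p) ℝ) := by
      rw [← Matrix.diagonal_one, Matrix.diagonal_sub]
    rw [hd, Matrix.mul_sub, Matrix.mul_one, Matrix.sub_mul, ← hMeq]
  have hLHS_sq : frobNorm (M - W₁ * Qᵀ) ^ 2 = ∑ i, (1 - sig i) ^ 2 := by
    rw [frobNorm_sq, hdiff]
    obtain ⟨D, hD⟩ : ∃ X, X = Matrix.diagonal (fun i => sig i - 1) := ⟨_, rfl⟩
    rw [← hD]
    have hDt : Dᵀ = D := by rw [hD, Matrix.diagonal_transpose]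
    have ht : (W₁ * D * Qᵀ)ᵀ = Q * D * W₁ᵀ := by
      rw [Matrix.transpose_mul, Matrix.transpose_mul, Matrix.transpose_transpose, hDt,
        Matrix.mul_assoc]
    rw [ht]
    have hprod : Q * D * W₁ᵀ * (W₁ * D * Qᵀ) = Q * (D * D) * Qᵀ := by
      calc Q * D * W₁ᵀ * (W₁ * D * Qᵀ)
          = Q * (D * ((W₁ᵀ * W₁) * (D * Qᵀ))) := by
            simp only [Matrix.mul_assoc]
        _ = Q * (D * (D * Qᵀ)) := by rw [hW₁orth, Matrix.one_mul]
        _ = Q * (D * D) * Qᵀ := by simp only [Matrix.mul_assoc]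
    rw [hprod, Matrix.trace_mul_comm (Q * (D * D)) Qᵀ, ← Matrix.mul_assoc, hQ1,
      Matrix.one_mul, hD, Matrix.diagonal_mul_diagonal, Matrix.trace_diagonal]
    apply Finset.sum_congr rfl
    intro i _
    ring
  have htr1A : Matrix.trace (1 - Mᵀ * M) = ∑ i, (1 - lam i) := by
    have h4 : Matrix.trace (1 - Mᵀ * M) = Matrix.trace (Qᵀ * (1 - Mᵀ * M) * Q) := by
      rw [Matrix.trace_mul_comm, ← Matrix.mul_assoc, hQ2, Matrix.one_mul]
    rw [h4, hcong, Matrix.trace_diagonal]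
  have hsig_le_one : ∀ i, sig i ≤ 1 := fun i => by
    rw [hsig]
    calc Real.sqrt (lam i) ≤ Real.sqrt 1 := Real.sqrt_le_sqrt (hlam_le_one i)
      _ = 1 := Real.sqrt_one
  have key : frobNorm (M - W₁ * Qᵀ) ≤ ∑ i, (1 - sig i) := by
    have h5 : frobNorm (M - W₁ * Qᵀ) = Real.sqrt (∑ i, (1 - sig i) ^ 2) := by
      rw [← hLHS_sq, Real.sqrt_sq (frobNorm_nonneg _)]
    rw [h5]
    have hterm : ∀ i ∈ Finset.univ, (0:ℝ) ≤ 1 - sig i := fun i _ => by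
      linarith [hsig_le_one i]
    calc Real.sqrt (∑ i, (1 - sig i) ^ 2) ≤ Real.sqrt ((∑ i, (1 - sig i)) ^ 2) :=
          Real.sqrt_le_sqrt (Finset.sum_sq_le_sq_sum_of_nonneg hterm)
      _ = ∑ i, (1 - sig i) := Real.sqrt_sq (Finset.sum_nonneg hterm)
  have cmp : (∑ i, (1 - sig i)) ≤ ∑ i, 2 * (1 - lam i) := by
    apply Finset.sum_le_sum
    intro i _
    have hsq : lam i ≤ sig i := by
      rw [hsig]
      rw [show lam i = Real.sqrt (lam i ^ 2) from (Real.sqrt_sq (hlam_nonneg i)).symm]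
      apply Real.sqrt_le_sqrt
      nlinarith [hlam_nonneg i, hlam_le_one i]
    nlinarith [hlam_le_one i]
  calc frobNorm (M - W₁ * Qᵀ) ≤ ∑ i, (1 - sig i) := key
    _ ≤ ∑ i, 2 * (1 - lam i) := cmp
    _ = 2 * ∑ i, (1 - lam i) := by rw [Finset.mul_sum]
    _ = 2 * Matrix.trace (1 - Mᵀ * M) := by rw [htr1A]

/-- For `U, V ∈ ℝ^{n×p}` with orthonormal columns there is an orthogonal `W ∈ ℝ^{p×p}`
(the orthogonal polar factor of `UᵀV`) with `‖UᵀV − W‖_F ≤ ‖UUᵀ − VVᵀ‖_F²`. -/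
theorem orthogonal_procrustes_bound (n p : ℕ)
    (U V : Matrix (Fin n) (Fin p) ℝ)
    (hU : Uᵀ * U = 1) (hV : Vᵀ * V = 1) :
    ∃ W : Matrix (Fin p) (Fin p) ℝ, Wᵀ * W = 1 ∧
      frobNorm (Uᵀ * V - W) ≤ frobNorm (U * Uᵀ - V * Vᵀ) ^ 2 := by
  have hUU : ∀ {m : Type} [Fintype m] (X : Matrix (Fin p) m ℝ), Uᵀ * (U * X) = X := by
    intro m _ X
    rw [← Matrix.mul_assoc, hU, Matrix.one_mul]
  have hVV : ∀ {m : Type} [Fintype m] (X : Matrix (Fin p) m ℝ), Vᵀ * (V * X) = X := by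
    intro m _ X
    rw [← Matrix.mul_assoc, hV, Matrix.one_mul]
  have h1 : (1 - (Uᵀ * V)ᵀ * (Uᵀ * V)).PosSemidef := by
    have hB : ((1 - U * Uᵀ) * V)ᴴ * ((1 - U * Uᵀ) * V) = 1 - (Uᵀ * V)ᵀ * (Uᵀ * V) := by
      rw [conjT_eq_transpose, Matrix.transpose_mul, Matrix.transpose_sub, Matrix.transpose_one,
        Matrix.transpose_mul, Matrix.transpose_transpose, Matrix.transpose_mul,
        Matrix.transpose_transpose]
      simp only [Matrix.mul_sub, Matrix.sub_mul, Matrix.mul_one, Matrix.one_mul,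
        Matrix.mul_assoc, hUU, hVV, hU, hV]
      abel
    have := Matrix.posSemidef_conjTranspose_mul_self ((1 - U * Uᵀ) * V)
    rwa [hB] at this
  obtain ⟨W, hWorth, hWbound⟩ := polar_bound (Uᵀ * V) h1
  refine ⟨W, hWorth, ?_⟩
  have hRHS : frobNorm (U * Uᵀ - V * Vᵀ) ^ 2 = 2 * Matrix.trace (1 - (Uᵀ * V)ᵀ * (Uᵀ * V)) := by
    rw [frobNorm_sq]
    have htp : (U * Uᵀ - V * Vᵀ)ᵀ = U * Uᵀ - V * Vᵀ := by
      rw [Matrix.transpose_sub, Matrix.transpose_mul, Matrix.transpose_mul,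
        Matrix.transpose_transpose, Matrix.transpose_transpose]
    rw [htp]
    have htrP : Matrix.trace (U * Uᵀ * (U * Uᵀ)) = (p : ℝ) := by
      rw [Matrix.mul_assoc, hUU]
      rw [Matrix.trace_mul_comm, hU, Matrix.trace_one]
      simp
    have htrR : Matrix.trace (V * Vᵀ * (V * Vᵀ)) = (p : ℝ) := by
      rw [Matrix.mul_assoc, hVV]
      rw [Matrix.trace_mul_comm, hV, Matrix.trace_one]
      simp
    have htrS : Matrix.trace (U * Uᵀ * (V * Vᵀ)) = Matrix.trace ((Uᵀ * V)ᵀ * (Uᵀ * V)) := by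
      rw [Matrix.mul_assoc U Uᵀ (V * Vᵀ), Matrix.trace_mul_comm U (Uᵀ * (V * Vᵀ))]
      rw [Matrix.trace_mul_comm ((Uᵀ * V)ᵀ) (Uᵀ * V)]
      rw [Matrix.transpose_mul, Matrix.transpose_transpose]
      congr 1
      simp only [Matrix.mul_assoc]
    have htrS' : Matrix.trace (V * Vᵀ * (U * Uᵀ)) = Matrix.trace ((Uᵀ * V)ᵀ * (Uᵀ * V)) := by
      rw [Matrix.trace_mul_comm, htrS]
    rw [Matrix.sub_mul, Matrix.mul_sub, Matrix.mul_sub, Matrix.trace_sub, Matrix.trace_sub,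
      Matrix.trace_sub, htrP, htrR, htrS, htrS']
    rw [Matrix.trace_sub, Matrix.trace_one]
    simp only [Fintype.card_fin]
    ring
  rw [hRHS]
  exact hWbound
end

section
/- Let p, q ≥ 0 with d = p + q ≥ 1 and n ≥ 1. Let U ∈ ℝ^{n×d} satisfy UᵀU = I_d, let D ∈ ℝ^{d×d} be diagonal with strictly positive diagonal entries, let W ∈ ℝ^{d×d} satisfy WWᵀ = I_d and W I_{p,q} Wᵀ = I_{p,q}, and let Q ∈ ℝ^{d×d} satisfy Q I_{p,q} Qᵀ = I_{p,q}. Set X = U D^{1/2} Q. Suppose A, P ∈ ℝ^{n×n} and X̂, R ∈ ℝ^{n×d} satisfy X̂ = U D^{1/2} W + (A − P) U D^{−1/2} W I_{p,q} + R. Then XᵀX = Qᵀ D Q is invertible and X̂ Wᵀ Q − X = (A − P) X (XᵀX)⁻¹ I_{p,q} + R Wᵀ Q. -/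
open Matrix

/-- The key algebraic identity relating the adjacency spectral embedding
`X̂ = U D^{1/2} W + (A − P) U D^{−1/2} W I_{p,q} + R` of a GRDPG to the latent position
matrix `X = U D^{1/2} Q`: the Gram matrix `XᵀX = Qᵀ D Q` is invertible and
`X̂ Wᵀ Q − X = (A − P) X (XᵀX)⁻¹ I_{p,q} + R Wᵀ Q`. -/
theorem spectral_embedding_key_identity (p q n : ℕ) (hd : 1 ≤ p + q) (hn : 1 ≤ n)
    (U : Matrix (Fin n) (Fin (p + q)) ℝ) (hU : Uᵀ * U = 1)
    (D : Fin (p + q) → ℝ) (hD : ∀ i, 0 < D i)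
    (W : Matrix (Fin (p + q)) (Fin (p + q)) ℝ)
    (hWorth : W * Wᵀ = 1) (hWpq : W * Ipq p q * Wᵀ = Ipq p q)
    (Q : Matrix (Fin (p + q)) (Fin (p + q)) ℝ)
    (hQ : Q * Ipq p q * Qᵀ = Ipq p q)
    (X Xhat R : Matrix (Fin n) (Fin (p + q)) ℝ)
    (A P : Matrix (Fin n) (Fin n) ℝ)
    (hX : X = U * Matrix.diagonal (fun i => Real.sqrt (D i)) * Q)
    (hXhat : Xhat = U * Matrix.diagonal (fun i => Real.sqrt (D i)) * W +
        (A - P) * U * Matrix.diagonal (fun i => (Real.sqrt (D i))⁻¹) * W * Ipq p q + R) :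
    Xᵀ * X = Qᵀ * Matrix.diagonal D * Q ∧ IsUnit (Xᵀ * X) ∧
      Xhat * Wᵀ * Q - X = (A - P) * X * (Xᵀ * X)⁻¹ * Ipq p q + R * Wᵀ * Q := by
  set J := Ipq p q with hJdef
  set S := Matrix.diagonal (fun i => Real.sqrt (D i)) with hSdef
  set T := Matrix.diagonal (fun i => (Real.sqrt (D i))⁻¹) with hTdef
  set Dinv := Matrix.diagonal (fun i => (D i)⁻¹) with hDinvdef
  have hDne : ∀ i, D i ≠ 0 := fun i => (hD i).ne'
  have hsne : ∀ i, Real.sqrt (D i) ≠ 0 := fun i => (Real.sqrt_pos.mpr (hD i)).ne'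
  -- basic diagonal facts
  have hJJ : J * J = 1 := by
    rw [hJdef, Ipq, diagonal_mul_diagonal, ← Matrix.diagonal_one]
    refine congrArg Matrix.diagonal (funext fun i => ?_); split <;> norm_num
  have hJT : Jᵀ = J := by rw [hJdef, Ipq, diagonal_transpose]
  have hST : Sᵀ = S := by rw [hSdef, diagonal_transpose]
  have hSS : S * S = Matrix.diagonal D := by
    rw [hSdef, diagonal_mul_diagonal]
    exact congrArg Matrix.diagonal (funext fun i => Real.mul_self_sqrt (hD i).le)
  have hSDinv : S * Dinv = T := by
    rw [hSdef, hDinvdef, hTdef, diagonal_mul_diagonal]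
    refine congrArg Matrix.diagonal (funext fun i => ?_)
    field_simp
    rw [div_eq_div_iff (hDne i) (hsne i), one_mul]
    exact Real.mul_self_sqrt (hD i).le
  have hDDinv : Matrix.diagonal D * Dinv = 1 := by
    rw [hDinvdef, diagonal_mul_diagonal, ← Matrix.diagonal_one]
    exact congrArg Matrix.diagonal (funext fun i => mul_inv_cancel₀ (hDne i))
  -- Q facts
  have hQr : Q * (J * Qᵀ * J) = 1 := by
    calc Q * (J * Qᵀ * J) = (Q * J * Qᵀ) * J := by noncomm_ring
    _ = J * J := by rw [hQ]
    _ = 1 := hJJ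
  have hQl : (J * Qᵀ * J) * Q = 1 := mul_eq_one_comm.mp hQr
  have hQJ : Qᵀ * (J * Q) = J := by
    have := congrArg (fun B => J * B) hQl
    simp only [mul_one] at this
    calc Qᵀ * (J * Q) = (J * J) * (Qᵀ * (J * Q)) := by rw [hJJ, one_mul]
    _ = J * ((J * Qᵀ * J) * Q) := by noncomm_ring
    _ = J := by rw [hQl, mul_one]
  -- Gram matrix
  have hGram : Xᵀ * X = Qᵀ * Matrix.diagonal D * Q := by
    rw [hX]
    calc (U * S * Q)ᵀ * (U * S * Q)
        = Qᵀ * (S * ((Uᵀ * U) * (S * Q))) := by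
          simp only [transpose_mul, hST, Matrix.mul_assoc]
    _ = Qᵀ * Matrix.diagonal D * Q := by
          rw [hU, one_mul, ← Matrix.mul_assoc S S Q, hSS, Matrix.mul_assoc]
  -- explicit inverse
  set M := J * Qᵀ * J * Dinv * (J * Q * J) with hMdef
  have hMr : (Xᵀ * X) * M = 1 := by
    rw [hGram, hMdef]
    calc Qᵀ * Matrix.diagonal D * Q * (J * Qᵀ * J * Dinv * (J * Q * J))
        = Qᵀ * (Matrix.diagonal D * ((Q * J * Qᵀ) * (J * Dinv * (J * (Q * J))))) := by
          noncomm_ring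
    _ = Qᵀ * (Matrix.diagonal D * (J * (J * Dinv * (J * (Q * J))))) := by rw [hQ]
    _ = Qᵀ * ((Matrix.diagonal D * Dinv) * (J * (Q * J))) := by
          rw [show J * (J * Dinv * (J * (Q * J))) = (J * J) * Dinv * (J * (Q * J)) by
            noncomm_ring, hJJ, one_mul]; noncomm_ring
    _ = Qᵀ * (J * Q) * J := by rw [hDDinv, one_mul]; noncomm_ring
    _ = 1 := by rw [hQJ, hJJ]
  have hMl : M * (Xᵀ * X) = 1 := mul_eq_one_comm.mp hMr
  have hUnit : IsUnit (Xᵀ * X) := ⟨⟨Xᵀ * X, M, hMr, hMl⟩, rfl⟩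
  have hinv : (Xᵀ * X)⁻¹ = M := Matrix.inv_eq_right_inv hMr
  refine ⟨hGram, hUnit, ?_⟩
  rw [hXhat, hinv, hMdef, hX]
  -- sandwich lemmas for right-associated rewriting
  have hW1 : ∀ B : Matrix (Fin (p+q)) (Fin (p+q)) ℝ, W * (Wᵀ * B) = B := by
    intro B; rw [← Matrix.mul_assoc, hWorth, one_mul]
  have hWJ : ∀ B : Matrix (Fin (p+q)) (Fin (p+q)) ℝ, W * (J * (Wᵀ * B)) = J * B := by
    intro B
    calc W * (J * (Wᵀ * B)) = (W * J * Wᵀ) * B := by noncomm_ring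
    _ = J * B := by rw [hWpq]
  have hQJ' : ∀ B : Matrix (Fin (p+q)) (Fin (p+q)) ℝ, Q * (J * (Qᵀ * B)) = J * B := by
    intro B
    calc Q * (J * (Qᵀ * B)) = (Q * J * Qᵀ) * B := by noncomm_ring
    _ = J * B := by rw [hQ]
  have hJJ' : ∀ B : Matrix (Fin (p+q)) (Fin (p+q)) ℝ, J * (J * B) = B := by
    intro B; rw [← Matrix.mul_assoc, hJJ, one_mul]
  have hSDinv' : ∀ B : Matrix (Fin (p+q)) (Fin (p+q)) ℝ, S * (Dinv * B) = T * B := by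
    intro B; rw [← Matrix.mul_assoc, hSDinv]
  simp only [Matrix.add_mul, Matrix.sub_mul, Matrix.mul_assoc, hJJ, Matrix.mul_one,
    hW1, hWJ, hQJ', hJJ', hSDinv']
  abel
end
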